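/- arXiv:1601.08151 — 7 statements merged into one kernel-verified Lean document; each statement's English description precedes it below -/
import Mathlib

section
/- If X and Y are real random variables with X smaller than Y in the convex order (i.e., E[ψ(X)] ≤ E[ψ(Y)] for all convex ψ for which the expectations exist), and E[ψ(X)] = E[ψ(Y)] for some strongly convex function ψ, then X and Y have the same distribution. -/
open MeasureTheory
open Set


lemma posPartSq_hasDerivAt (u : ℝ) :
    HasDerivAt (fun u : ℝ => max u 0 ^ 2) (2 * max u 0) u := by
  rcases lt_trichotomy u 0 with h | rfl | h
  · have he : (fun u : ℝ => max u 0 ^ 2) =ᶠ[nhds u] fun _ => (0:ℝ) := by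
      filter_upwards [Iio_mem_nhds h] with x hx
      rw [mem_Iio] at hx
      simp [max_eq_right hx.le]
    have : HasDerivAt (fun _ : ℝ => (0:ℝ)) 0 u := hasDerivAt_const u 0
    rw [max_eq_right h.le, mul_zero]
    exact this.congr_of_eventuallyEq he
  · rw [hasDerivAt_iff_tendsto_slope]
    have hs : ∀ x : ℝ, slope (fun u : ℝ => max u 0 ^ 2) 0 x = max x 0 := by
      intro x
      rw [slope_def_field]
      rcases le_or_gt x 0 with hx | hx
      · rw [max_eq_right hx, max_eq_right le_rfl]
        simp
      · rw [max_eq_left hx.le, max_eq_right le_rfl]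
        field_simp
        ring
    have h2 : Filter.Tendsto (fun x : ℝ => max x 0) (nhdsWithin 0 {(0:ℝ)}ᶜ) (nhds (2 * max 0 0)) := by
      have : Filter.Tendsto (fun x : ℝ => max x 0) (nhds 0) (nhds (max 0 0)) :=
        (continuous_id.max continuous_const).tendsto 0
      simpa using this.mono_left nhdsWithin_le_nhds
    exact h2.congr (fun x => (hs x).symm)
  · have he : (fun u : ℝ => max u 0 ^ 2) =ᶠ[nhds u] fun x => x ^ 2 := by
      filter_upwards [Ioi_mem_nhds h] with x hx
      rw [mem_Ioi] at hx
      simp [max_eq_left hx.le]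
    have : HasDerivAt (fun x : ℝ => x ^ 2) (2 * u) u := by
      simpa using hasDerivAt_pow 2 u
    rw [max_eq_left h.le]
    exact this.congr_of_eventuallyEq he

lemma shifted_hasDerivAt (t x : ℝ) :
    HasDerivAt (fun x : ℝ => max (x - t) 0 ^ 2) (2 * max (x - t) 0) x := by
  have h1 : HasDerivAt (fun x : ℝ => x - t) 1 x := (hasDerivAt_id x).sub_const t
  have := (posPartSq_hasDerivAt (x - t)).comp x h1
  rw [mul_one] at this
  exact this

lemma convexOn_posPartSq (t : ℝ) :
    ConvexOn ℝ univ (fun x : ℝ => max (x - t) 0 ^ 2) := by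
  have hdiff : Differentiable ℝ (fun x : ℝ => max (x - t) 0 ^ 2) :=
    fun x => (shifted_hasDerivAt t x).differentiableAt
  have hderiv : deriv (fun x : ℝ => max (x - t) 0 ^ 2) = fun x => 2 * max (x - t) 0 :=
    funext fun x => (shifted_hasDerivAt t x).deriv
  refine Monotone.convexOn_univ_of_deriv hdiff ?_
  rw [hderiv]
  intro a b hab
  dsimp only
  have : max (a - t) 0 ≤ max (b - t) 0 := max_le_max (by linarith) le_rfl
  linarith

lemma convexOn_aux (t m : ℝ) (hm : 0 ≤ m) :
    ConvexOn ℝ univ (fun x : ℝ => m / 2 * (x ^ 2 - max (x - t) 0 ^ 2)) := by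
  have hd : ∀ x : ℝ, HasDerivAt (fun x : ℝ => m / 2 * (x ^ 2 - max (x - t) 0 ^ 2))
      (m / 2 * (2 * x - 2 * max (x - t) 0)) x := by
    intro x
    have h1 : HasDerivAt (fun x : ℝ => x ^ 2) (2 * x) x := by simpa using hasDerivAt_pow 2 x
    exact ((h1.sub (shifted_hasDerivAt t x)).const_mul (m / 2))
  have hdiff : Differentiable ℝ _ := fun x => (hd x).differentiableAt
  have hderiv : deriv (fun x : ℝ => m / 2 * (x ^ 2 - max (x - t) 0 ^ 2)) =
      fun x => m / 2 * (2 * x - 2 * max (x - t) 0) := funext fun x => (hd x).deriv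
  refine Monotone.convexOn_univ_of_deriv hdiff ?_
  rw [hderiv]
  intro a b hab
  dsimp only
  have key : ∀ x : ℝ, 2 * x - 2 * max (x - t) 0 = 2 * min x t := by
    intro x
    rcases le_total x t with h | h
    · rw [max_eq_right (by linarith), min_eq_left h]; ring
    · rw [max_eq_left (by linarith), min_eq_right h]; ring
  rw [key, key]
  have : min a t ≤ min b t := min_le_min hab le_rfl
  nlinarith

-- affine-type lower bound for a convex function on ℝ
lemma convex_lower_bound {g : ℝ → ℝ} (hg : ConvexOn ℝ univ g) :
    ∃ c a : ℝ, ∀ x : ℝ, c - a * |x| ≤ g x := by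
  obtain ⟨a, h3a, h3b⟩ : ∃ a, |g 0 - g (-1)| ≤ a ∧ |g 1 - g 0| ≤ a :=
    ⟨max |g 0 - g (-1)| |g 1 - g 0|, le_max_left _ _, le_max_right _ _⟩
  refine ⟨g 0, a, fun x => ?_⟩
  rcases lt_trichotomy x 0 with hx | rfl | hx
  · -- use points x < 0 < 1 : slope(x,0) ≤ slope(0,1)
    have this := hg.slope_mono_adjacent (mem_univ x) (mem_univ 1) hx one_pos
    have hx' : (0:ℝ) < -x := by linarith
    have h1 : (g 0 - g x) / (0 - x) ≤ g 1 - g 0 := by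
      have := this; rw [show ((1:ℝ) - 0) = 1 by norm_num, div_one] at this; exact this
    have h2 : g 0 - g x ≤ (g 1 - g 0) * (-x) := by
      rw [div_le_iff₀ (by linarith : (0:ℝ) < 0 - x)] at h1
      linarith [h1]
    have h3 : |g 1 - g 0| ≤ a := h3b
    have h4 : |x| = -x := abs_of_neg hx
    have h5 : g 1 - g 0 ≤ |g 1 - g 0| := le_abs_self _
    rw [h4]
    linarith [mul_le_mul_of_nonneg_right h5 hx'.le, mul_le_mul_of_nonneg_right h3 hx'.le]
  · simp
  · -- use points -1 < 0 < x : slope(-1,0) ≤ slope(0,x)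
    have this := hg.slope_mono_adjacent (mem_univ (-1:ℝ)) (mem_univ x) (by norm_num) hx
    have h1 : g 0 - g (-1) ≤ (g x - g 0) / x := by
      rw [show ((0:ℝ) - -1) = 1 by norm_num, div_one, sub_zero] at this; exact this
    have h2 : (g 0 - g (-1)) * x ≤ g x - g 0 := by
      rw [le_div_iff₀ hx] at h1
      linarith
    have h3 : |g 0 - g (-1)| ≤ a := h3a
    have h4 : |x| = x := abs_of_pos hx
    have h5 : -(g 0 - g (-1)) ≤ |g 0 - g (-1)| := neg_le_abs _
    rw [h4]
    linarith [mul_le_mul_of_nonneg_right h5 hx.le, mul_le_mul_of_nonneg_right h3 hx.le]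

-- second moment from integrability of a strongly convex function
lemma sq_integrable_of_strong {Ω : Type*} [MeasurableSpace Ω] (P : Measure Ω)
    [IsProbabilityMeasure P] {Z : Ω → ℝ} (hZ : Measurable Z) {ψ : ℝ → ℝ} {m : ℝ}
    (hm : 0 < m) (hg : ConvexOn ℝ univ (fun x => ψ x - m / 2 * x ^ 2))
    (hI : Integrable (fun ω => ψ (Z ω)) P) :
    Integrable (fun ω => (Z ω) ^ 2) P := by
  obtain ⟨g0, a, hab⟩ := convex_lower_bound hg
  have key : ∀ x : ℝ, x ^ 2 ≤ (4 * m * ψ x + (4 * a ^ 2 - 4 * g0 * m)) / m ^ 2 := by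
    intro x
    have h1 := hab x
    have h1m := mul_le_mul_of_nonneg_left h1 hm.le
    have h3m : m ^ 2 * |x| ^ 2 = m ^ 2 * x ^ 2 := by rw [sq_abs]
    rw [le_div_iff₀ (by positivity : (0:ℝ) < m ^ 2)]
    nlinarith [sq_nonneg (m * |x| - 2 * a), h1m, h3m]
  refine Integrable.mono' (((hI.const_mul (4 * m)).add
      (integrable_const (4 * a ^ 2 - 4 * g0 * m))).div_const (m ^ 2))
    ((hZ.pow_const 2).aestronglyMeasurable) ?_
  filter_upwards with ω
  rw [Real.norm_eq_abs, abs_of_nonneg (sq_nonneg _)]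
  simpa using key (Z ω)

-- integrability of truncated squares etc.
lemma int_maxsq {Ω : Type*} [MeasurableSpace Ω] (P : Measure Ω) [IsProbabilityMeasure P]
    {Z : Ω → ℝ} (hZ : Measurable Z) (hZ2 : Integrable (fun ω => (Z ω) ^ 2) P) (t : ℝ) :
    Integrable (fun ω => max (Z ω - t) 0 ^ 2) P := by
  refine Integrable.mono' ((hZ2.const_mul 2).add (integrable_const (2 * t ^ 2)))
    (((hZ.sub_const t).max measurable_const).pow_const 2).aestronglyMeasurable ?_
  filter_upwards with ω
  rw [Real.norm_eq_abs, abs_of_nonneg (sq_nonneg _)]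
  simp only [Pi.add_apply]
  rcases le_total (Z ω) t with h | h
  · rw [max_eq_right (by linarith)]
    nlinarith [sq_nonneg (Z ω + t), sq_nonneg (Z ω - t)]
  · rw [max_eq_left (by linarith)]
    nlinarith [sq_nonneg (Z ω + t)]

lemma int_max {Ω : Type*} [MeasurableSpace Ω] (P : Measure Ω) [IsProbabilityMeasure P]
    {Z : Ω → ℝ} (hZ : Measurable Z) (hZ2 : Integrable (fun ω => (Z ω) ^ 2) P) (t : ℝ) :
    Integrable (fun ω => max (Z ω - t) 0) P := by
  refine Integrable.mono' ((int_maxsq P hZ hZ2 t).add (integrable_const 1))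
    ((hZ.sub_const t).max measurable_const).aestronglyMeasurable ?_
  filter_upwards with ω
  rw [Real.norm_eq_abs, abs_of_nonneg (le_max_right _ _)]
  simp only [Pi.add_apply]
  nlinarith [sq_nonneg (max (Z ω - t) 0 - 1), le_max_right (Z ω - t) (0:ℝ)]

lemma aux_up (a h : ℝ) (hh : 0 < h) :
    max a 0 ^ 2 - max (a - h) 0 ^ 2 ≤ 2 * h * max a 0 := by
  rcases le_total a 0 with h1 | h1
  · rw [max_eq_right h1, max_eq_right (by linarith)]
    simp
  · rcases le_total a h with h2 | h2
    · rw [max_eq_left h1, max_eq_right (by linarith)]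
      nlinarith
    · rw [max_eq_left h1, max_eq_left (by linarith)]
      nlinarith

lemma aux_lo (a h : ℝ) (hh : 0 < h) :
    2 * h * max (a - h) 0 ≤ max a 0 ^ 2 - max (a - h) 0 ^ 2 := by
  rcases le_total a h with h2 | h2
  · rw [max_eq_right (by linarith)]
    nlinarith [le_max_right a 0, le_max_left a 0]
  · rw [max_eq_left (by linarith), max_eq_left (by linarith : (0:ℝ) ≤ a)]
    nlinarith

lemma aux_up1 (a h : ℝ) (hh : 0 < h) (ha : 0 < a) :
    max a 0 - max (a - h) 0 ≤ h := by
  rcases le_total a h with h2 | h2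
  · rw [max_eq_left ha.le, max_eq_right (by linarith)]; linarith
  · rw [max_eq_left ha.le, max_eq_left (by linarith)]; linarith

lemma aux_lo1 (a h : ℝ) (hh : 0 < h) (ha : h < a) :
    h ≤ max a 0 - max (a - h) 0 := by
  rw [max_eq_left (by linarith), max_eq_left (by linarith)]; linarith

section Meas
variable {Ω : Type*} [MeasurableSpace Ω] (P : Measure Ω) [IsProbabilityMeasure P]
  {Z : Ω → ℝ} (hZ : Measurable Z) (hZ2 : Integrable (fun ω => (Z ω) ^ 2) P)
include hZ hZ2

lemma G_sub_le (t h : ℝ) (hh : 0 < h) :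
    (∫ ω, max (Z ω - t) 0 ^ 2 ∂P) - ∫ ω, max (Z ω - (t + h)) 0 ^ 2 ∂P ≤
      2 * h * ∫ ω, max (Z ω - t) 0 ∂P := by
  rw [← integral_sub (int_maxsq P hZ hZ2 t) (int_maxsq P hZ hZ2 (t + h)),
    ← integral_const_mul]
  refine integral_mono ((int_maxsq P hZ hZ2 t).sub (int_maxsq P hZ hZ2 (t + h)))
    ((int_max P hZ hZ2 t).const_mul _) fun ω => ?_
  have := aux_up (Z ω - t) h hh
  have he : Z ω - (t + h) = Z ω - t - h := by ring
  rw [he]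
  exact this

lemma G_sub_ge (t h : ℝ) (hh : 0 < h) :
    2 * h * ∫ ω, max (Z ω - (t + h)) 0 ∂P ≤
      (∫ ω, max (Z ω - t) 0 ^ 2 ∂P) - ∫ ω, max (Z ω - (t + h)) 0 ^ 2 ∂P := by
  rw [← integral_sub (int_maxsq P hZ hZ2 t) (int_maxsq P hZ hZ2 (t + h)),
    ← integral_const_mul]
  refine integral_mono ((int_max P hZ hZ2 (t + h)).const_mul _)
    ((int_maxsq P hZ hZ2 t).sub (int_maxsq P hZ hZ2 (t + h))) fun ω => ?_
  have := aux_lo (Z ω - t) h hh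
  have he : Z ω - (t + h) = Z ω - t - h := by ring
  rw [he]
  exact this

lemma indicator_integral (t c : ℝ) :
    ∫ ω, (Z ⁻¹' Ioi t).indicator (fun _ => c) ω ∂P = (P (Z ⁻¹' Ioi t)).toReal * c := by
  rw [integral_indicator_const c (hZ measurableSet_Ioi), smul_eq_mul]
  rfl

lemma H_sub_le (t h : ℝ) (hh : 0 < h) :
    (∫ ω, max (Z ω - t) 0 ∂P) - ∫ ω, max (Z ω - (t + h)) 0 ∂P ≤
      (P (Z ⁻¹' Ioi t)).toReal * h := by
  rw [← integral_sub (int_max P hZ hZ2 t) (int_max P hZ hZ2 (t + h)),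
    ← indicator_integral P hZ hZ2 t h]
  refine integral_mono ((int_max P hZ hZ2 t).sub (int_max P hZ hZ2 (t + h)))
    ((integrable_const h).indicator (hZ measurableSet_Ioi)) fun ω => ?_
  by_cases hω : ω ∈ Z ⁻¹' Ioi t
  · rw [indicator_of_mem hω]
    have ha : 0 < Z ω - t := by
      simpa [sub_pos] using hω
    have := aux_up1 (Z ω - t) h hh ha
    have he : Z ω - (t + h) = Z ω - t - h := by ring
    simp only [he]
    linarith
  · rw [indicator_of_notMem hω]
    have ha : Z ω - t ≤ 0 := by
      simp only [mem_preimage, mem_Ioi, not_lt] at hω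
      linarith
    rw [max_eq_right ha, max_eq_right (by linarith : Z ω - (t + h) ≤ 0)]
    simp

lemma H_sub_ge (t h : ℝ) (hh : 0 < h) :
    (P (Z ⁻¹' Ioi (t + h))).toReal * h ≤
      (∫ ω, max (Z ω - t) 0 ∂P) - ∫ ω, max (Z ω - (t + h)) 0 ∂P := by
  rw [← integral_sub (int_max P hZ hZ2 t) (int_max P hZ hZ2 (t + h)),
    ← indicator_integral P hZ hZ2 (t + h) h]
  refine integral_mono ((integrable_const h).indicator (hZ measurableSet_Ioi))
    ((int_max P hZ hZ2 t).sub (int_max P hZ hZ2 (t + h))) fun ω => ?_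
  by_cases hω : ω ∈ Z ⁻¹' Ioi (t + h)
  · rw [indicator_of_mem hω]
    have ha : t + h < Z ω := hω
    have := aux_lo1 (Z ω - t) h hh (by linarith)
    have he : Z ω - (t + h) = Z ω - t - h := by ring
    simp only [he]
    linarith
  · rw [indicator_of_notMem hω]
    have : max (Z ω - (t + h)) 0 ≤ max (Z ω - t) 0 := max_le_max (by linarith) le_rfl
    linarith

lemma H_lip : LipschitzWith 1 (fun t => ∫ ω, max (Z ω - t) 0 ∂P) := by
  refine LipschitzWith.of_dist_le_mul fun s t => ?_
  rw [Real.dist_eq, Real.dist_eq, NNReal.coe_one, one_mul,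
    ← integral_sub (int_max P hZ hZ2 s) (int_max P hZ hZ2 t)]
  have : ‖∫ ω, (max (Z ω - s) 0 - max (Z ω - t) 0) ∂P‖ ≤ |s - t| * (P univ).toReal := by
    refine norm_integral_le_of_norm_le_const ?_
    filter_upwards with ω
    rw [Real.norm_eq_abs]
    calc |max (Z ω - s) 0 - max (Z ω - t) 0| ≤ |(Z ω - s) - (Z ω - t)| :=
          abs_max_sub_max_le_abs _ _ _
      _ = |s - t| := by rw [abs_sub_comm]; ring_nf
  simpa using this
end Meas
/-- If `X ≤_cvx Y` (convex order) and `E[ψ(X)] = E[ψ(Y)]` for some strongly convex `ψ`,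
then `X` and `Y` have the same distribution. -/
theorem convex_order_eq_of_strongConvex
    {Ω : Type*} [MeasurableSpace Ω] (P : Measure Ω) [IsProbabilityMeasure P]
    (X Y : Ω → ℝ) (hX : Measurable X) (hY : Measurable Y)
    (hcvx : ∀ ψ : ℝ → ℝ, ConvexOn ℝ Set.univ ψ →
      Integrable (fun ω => ψ (X ω)) P → Integrable (fun ω => ψ (Y ω)) P →
      ∫ ω, ψ (X ω) ∂P ≤ ∫ ω, ψ (Y ω) ∂P)
    (ψ : ℝ → ℝ) (m : ℝ) (hm : 0 < m) (hψ : StrongConvexOn Set.univ m ψ)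
    (hIX : Integrable (fun ω => ψ (X ω)) P) (hIY : Integrable (fun ω => ψ (Y ω)) P)
    (heq : ∫ ω, ψ (X ω) ∂P = ∫ ω, ψ (Y ω) ∂P) :
    Measure.map X P = Measure.map Y P := by
  -- the convex part of ψ
  have hg : ConvexOn ℝ univ (fun x => ψ x - m / 2 * x ^ 2) := by
    have hg0 := strongConvexOn_iff_convex.mp hψ
    have he : (fun x : ℝ => ψ x - m / 2 * ‖x‖ ^ 2) = fun x => ψ x - m / 2 * x ^ 2 :=
      funext fun x => by rw [Real.norm_eq_abs, sq_abs]
    rwa [he] at hg0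
  -- second moments
  have hX2 : Integrable (fun ω => (X ω) ^ 2) P := sq_integrable_of_strong P hX hm hg hIX
  have hY2 : Integrable (fun ω => (Y ω) ^ 2) P := sq_integrable_of_strong P hY hm hg hIY
  -- Step A : equality of truncated second moments
  have hGeq : ∀ t, ∫ ω, max (X ω - t) 0 ^ 2 ∂P = ∫ ω, max (Y ω - t) 0 ^ 2 ∂P := by
    intro t
    have h1 := hcvx _ (convexOn_posPartSq t) (int_maxsq P hX hX2 t) (int_maxsq P hY hY2 t)
    have hΦc : ConvexOn ℝ univ (fun x => ψ x - m / 2 * max (x - t) 0 ^ 2) := by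
      have hsum := hg.add (convexOn_aux t m hm.le)
      have heqf : ((fun x : ℝ => ψ x - m / 2 * x ^ 2) +
          fun x : ℝ => m / 2 * (x ^ 2 - max (x - t) 0 ^ 2))
          = fun x => ψ x - m / 2 * max (x - t) 0 ^ 2 :=
        funext fun x => by simp only [Pi.add_apply]; ring
      rwa [heqf] at hsum
    have hIΦX : Integrable (fun ω => ψ (X ω) - m / 2 * max (X ω - t) 0 ^ 2) P :=
      hIX.sub ((int_maxsq P hX hX2 t).const_mul _)
    have hIΦY : Integrable (fun ω => ψ (Y ω) - m / 2 * max (Y ω - t) 0 ^ 2) P :=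
      hIY.sub ((int_maxsq P hY hY2 t).const_mul _)
    have h2 := hcvx _ hΦc hIΦX hIΦY
    rw [integral_sub hIX ((int_maxsq P hX hX2 t).const_mul _),
      integral_sub hIY ((int_maxsq P hY hY2 t).const_mul _),
      integral_const_mul, integral_const_mul] at h2
    have h3 : m / 2 * (∫ ω, max (Y ω - t) 0 ^ 2 ∂P) ≤ m / 2 * ∫ ω, max (X ω - t) 0 ^ 2 ∂P := by
      linarith
    have h4 := le_of_mul_le_mul_left h3 (by linarith : (0:ℝ) < m / 2)
    linarith
  -- Step B : equality of truncated first moments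
  have hHeq : ∀ t, ∫ ω, max (X ω - t) 0 ∂P = ∫ ω, max (Y ω - t) 0 ∂P := by
    intro t
    have key : ∀ (Z : Ω → ℝ), Measurable Z → ∀ hZ2 : Integrable (fun ω => (Z ω) ^ 2) P,
        Filter.Tendsto
          (fun h => ((∫ ω, max (Z ω - t) 0 ^ 2 ∂P) - ∫ ω, max (Z ω - (t + h)) 0 ^ 2 ∂P) / (2 * h))
          (nhdsWithin 0 (Ioi 0)) (nhds (∫ ω, max (Z ω - t) 0 ∂P)) := by
      intro Z hZ hZ2
      have hadd : Filter.Tendsto (fun h : ℝ => t + h) (nhdsWithin 0 (Ioi 0)) (nhds t) := by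
        have h0 : Filter.Tendsto (fun h : ℝ => t + h) (nhds 0) (nhds (t + 0)) :=
          (continuous_const.add continuous_id).tendsto 0
        rw [add_zero] at h0
        exact h0.mono_left nhdsWithin_le_nhds
      have hlow : Filter.Tendsto (fun h : ℝ => ∫ ω, max (Z ω - (t + h)) 0 ∂P)
          (nhdsWithin 0 (Ioi 0)) (nhds (∫ ω, max (Z ω - t) 0 ∂P)) :=
        ((H_lip P hZ hZ2).continuous.tendsto t).comp hadd
      refine tendsto_of_tendsto_of_tendsto_of_le_of_le' hlow tendsto_const_nhds ?_ ?_
      · filter_upwards [self_mem_nhdsWithin] with h hh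
        rw [mem_Ioi] at hh
        rw [le_div_iff₀ (by linarith : (0:ℝ) < 2 * h)]
        have := G_sub_ge P hZ hZ2 t h hh
        linarith
      · filter_upwards [self_mem_nhdsWithin] with h hh
        rw [mem_Ioi] at hh
        rw [div_le_iff₀ (by linarith : (0:ℝ) < 2 * h)]
        have := G_sub_le P hZ hZ2 t h hh
        linarith
    have tX := key X hX hX2
    have tY := key Y hY hY2
    have e : (fun h : ℝ =>
        ((∫ ω, max (X ω - t) 0 ^ 2 ∂P) - ∫ ω, max (X ω - (t + h)) 0 ^ 2 ∂P) / (2 * h)) =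
        fun h : ℝ =>
        ((∫ ω, max (Y ω - t) 0 ^ 2 ∂P) - ∫ ω, max (Y ω - (t + h)) 0 ^ 2 ∂P) / (2 * h) :=
      funext fun h => by rw [hGeq t, hGeq (t + h)]
    rw [← e] at tY
    exact tendsto_nhds_unique tX tY
  -- Step C : equality of survival functions
  have main_ineq : ∀ (Z W : Ω → ℝ), Measurable Z → Measurable W →
      Integrable (fun ω => (Z ω) ^ 2) P → Integrable (fun ω => (W ω) ^ 2) P →
      (∀ s, ∫ ω, max (Z ω - s) 0 ∂P = ∫ ω, max (W ω - s) 0 ∂P) →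
      ∀ t, P (Z ⁻¹' Ioi t) ≤ P (W ⁻¹' Ioi t) := by
    intro Z W hZ hW hZ2 hW2 hHZW t
    have step : ∀ h : ℝ, 0 < h →
        (P (Z ⁻¹' Ioi (t + h))).toReal ≤ (P (W ⁻¹' Ioi t)).toReal := by
      intro h hh
      have h1 := H_sub_ge P hZ hZ2 t h hh
      have h2 := H_sub_le P hW hW2 t h hh
      rw [hHZW t, hHZW (t + h)] at h1
      exact le_of_mul_le_mul_right (le_trans h1 h2) hh
    have hU : Z ⁻¹' Ioi t = ⋃ n : ℕ, Z ⁻¹' Ioi (t + 1 / ((n : ℝ) + 1)) := by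
      ext ω
      simp only [mem_preimage, mem_Ioi, mem_iUnion]
      constructor
      · intro hlt
        obtain ⟨n, hn⟩ := exists_nat_one_div_lt (sub_pos.mpr hlt)
        exact ⟨n, by linarith⟩
      · rintro ⟨n, hn⟩
        have : (0:ℝ) < 1 / ((n : ℝ) + 1) := by positivity
        linarith
    have hmono : Monotone (fun n : ℕ => Z ⁻¹' Ioi (t + 1 / ((n : ℝ) + 1))) := by
      intro n k hnk
      refine preimage_mono (Ioi_subset_Ioi ?_)
      have h1 : (1 : ℝ) / ((k : ℝ) + 1) ≤ 1 / ((n : ℝ) + 1) := by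
        apply one_div_le_one_div_of_le
        · positivity
        · have := (Nat.cast_le (α := ℝ)).mpr hnk
          linarith
      linarith
    rw [hU, hmono.directed_le.measure_iUnion]
    refine iSup_le fun n => ?_
    have hpos : (0:ℝ) < 1 / ((n : ℝ) + 1) := by positivity
    exact (ENNReal.toReal_le_toReal (measure_ne_top P _) (measure_ne_top P _)).mp
      (step _ hpos)
  have hPeq : ∀ t, P (X ⁻¹' Ioi t) = P (Y ⁻¹' Ioi t) := fun t =>
    le_antisymm (main_ineq X Y hX hY hX2 hY2 hHeq t)
      (main_ineq Y X hY hX hY2 hX2 (fun s => (hHeq s).symm) t)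
  -- conclude
  haveI : IsProbabilityMeasure (P.map X) := Measure.isProbabilityMeasure_map hX.aemeasurable
  haveI : IsProbabilityMeasure (P.map Y) := Measure.isProbabilityMeasure_map hY.aemeasurable
  refine Measure.ext_of_Iic (P.map X) (P.map Y) fun a => ?_
  rw [Measure.map_apply hX measurableSet_Iic, Measure.map_apply hY measurableSet_Iic]
  have hc : ∀ Z : Ω → ℝ, Z ⁻¹' Iic a = (Z ⁻¹' Ioi a)ᶜ := fun Z => by
    ext ω; simp [not_lt]
  rw [hc X, hc Y, measure_compl (hX measurableSet_Ioi) (measure_ne_top P _),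
    measure_compl (hY measurableSet_Ioi) (measure_ne_top P _), hPeq a]
end

section
/- Let X ~ Beta(α, β) and X' ~ Beta(α', β') with α < α', β < β', and α/(α+β) = α'/(α'+β'). Then X' is smaller than X in the convex order: for every convex function ψ: [0,1] → ℝ, E[ψ(X')] ≤ E[ψ(X)]. -/
open MeasureTheory

section Helpers
open Set
open scoped ENNReal NNReal

lemma betaKernel_ofReal (a b : ℝ) {x : ℝ} (h0 : 0 ≤ x) (h1 : x ≤ 1) :
    (x:ℂ) ^ ((a:ℂ) - 1) * (1 - (x:ℂ)) ^ ((b:ℂ) - 1)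
      = ((x ^ (a-1) * (1-x) ^ (b-1) : ℝ) : ℂ) := by
  rw [Complex.ofReal_mul, Complex.ofReal_cpow h0, Complex.ofReal_cpow (by linarith)]
  push_cast
  ring

lemma betaKernel_integrableOn {a b : ℝ} (ha : 0 < a) (hb : 0 < b) :
    IntegrableOn (fun x : ℝ => x ^ (a-1) * (1-x) ^ (b-1)) (Set.Ioo 0 1) := by
  have h := Complex.betaIntegral_convergent (u := a) (v := b) (by simpa using ha)
    (by simpa using hb)
  rw [intervalIntegrable_iff_integrableOn_Ioc_of_le zero_le_one] at h
  have h2 : IntegrableOn (fun x : ℝ => (x:ℂ) ^ ((a:ℂ) - 1) * (1 - (x:ℂ)) ^ ((b:ℂ) - 1))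
      (Set.Ioo 0 1) := h.mono_set Set.Ioo_subset_Ioc_self
  refine h2.re.congr ?_
  filter_upwards [ae_restrict_mem measurableSet_Ioo] with x hx
  rw [betaKernel_ofReal a b hx.1.le hx.2.le]
  simp

lemma betaKernel_integral {a b : ℝ} (ha : 0 < a) (hb : 0 < b) :
    ∫ x in Set.Ioo (0:ℝ) 1, x ^ (a-1) * (1-x) ^ (b-1)
      = Real.Gamma a * Real.Gamma b / Real.Gamma (a + b) := by
  have key := Complex.Gamma_mul_Gamma_eq_betaIntegral (s := (a:ℂ)) (t := (b:ℂ))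
    (by simpa using ha) (by simpa using hb)
  have h1 : Complex.betaIntegral a b
      = ((∫ x in Set.Ioo (0:ℝ) 1, x ^ (a-1) * (1-x) ^ (b-1) : ℝ) : ℂ) := by
    rw [Complex.betaIntegral, intervalIntegral.integral_of_le zero_le_one,
      MeasureTheory.integral_Ioc_eq_integral_Ioo]
    rw [setIntegral_congr_fun measurableSet_Ioo
      (fun x hx => betaKernel_ofReal a b hx.1.le hx.2.le)]
    exact integral_ofReal
  rw [h1, ← Complex.ofReal_add, Complex.Gamma_ofReal, Complex.Gamma_ofReal,
    Complex.Gamma_ofReal, ← Complex.ofReal_mul, ← Complex.ofReal_mul] at key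
  have key' := Complex.ofReal_injective key
  have hG : Real.Gamma (a+b) ≠ 0 := (Real.Gamma_pos_of_pos (by linarith)).ne'
  field_simp
  linarith [key']

lemma betaKernel_integral_mul {a b : ℝ} (ha : 0 < a) (hb : 0 < b) :
    ∫ x in Set.Ioo (0:ℝ) 1, x * (x ^ (a-1) * (1-x) ^ (b-1))
      = (a / (a + b)) * (Real.Gamma a * Real.Gamma b / Real.Gamma (a + b)) := by
  have h := betaKernel_integral (a := a+1) (b := b) (by linarith) hb
  rw [setIntegral_congr_fun measurableSet_Ioo (f := fun x => x * (x ^ (a-1) * (1-x) ^ (b-1)))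
    (g := fun x => x ^ (a+1-1) * (1-x) ^ (b-1)) ?_]
  · rw [h, Real.Gamma_add_one ha.ne', show a+1+b = (a+b)+1 by ring,
      Real.Gamma_add_one (by positivity : a+b ≠ 0)]
    have hG : Real.Gamma (a+b) ≠ 0 := (Real.Gamma_pos_of_pos (by linarith)).ne'
    field_simp
  · intro x hx
    have hx0 : (0:ℝ) < x := hx.1
    simp only []
    rw [show a+1-1 = 1+(a-1) by ring, Real.rpow_add hx0, Real.rpow_one]
    ring

lemma convexOn_abs_bounded {ψ : ℝ → ℝ} (hψ : ConvexOn ℝ (Set.Icc 0 1) ψ) :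
    ∀ x ∈ Set.Icc (0:ℝ) 1, |ψ x| ≤ |ψ 0| + |ψ 1| + 2*|ψ (1/2)| := by
  intro x hx
  obtain ⟨hx0, hx1⟩ := hx
  have h0 : (0:ℝ) ∈ Set.Icc (0:ℝ) 1 := by constructor <;> norm_num
  have h1 : (1:ℝ) ∈ Set.Icc (0:ℝ) 1 := by constructor <;> norm_num
  have hxm : x ∈ Set.Icc (0:ℝ) 1 := ⟨hx0, hx1⟩
  have hym : 1 - x ∈ Set.Icc (0:ℝ) 1 := ⟨by linarith, by linarith⟩
  have hupper : ∀ y ∈ Set.Icc (0:ℝ) 1, ψ y ≤ |ψ 0| + |ψ 1| := by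
    intro y hy
    have := hψ.2 h0 h1 (by linarith [hy.2] : (0:ℝ) ≤ 1 - y) (hy.1) (by ring)
    simp only [smul_eq_mul, mul_zero, mul_one, zero_add] at this
    have c0 : (1-y) * ψ 0 ≤ |ψ 0| := by
      calc (1-y) * ψ 0 ≤ (1-y) * |ψ 0| := by
            apply mul_le_mul_of_nonneg_left (le_abs_self _) (by linarith [hy.2])
        _ ≤ 1 * |ψ 0| := by
            apply mul_le_mul_of_nonneg_right (by linarith [hy.1]) (abs_nonneg _)
        _ = |ψ 0| := one_mul _
    have c1 : y * ψ 1 ≤ |ψ 1| := by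
      calc y * ψ 1 ≤ y * |ψ 1| := mul_le_mul_of_nonneg_left (le_abs_self _) hy.1
        _ ≤ 1 * |ψ 1| := mul_le_mul_of_nonneg_right hy.2 (abs_nonneg _)
        _ = |ψ 1| := one_mul _
    linarith
  have hmid := hψ.2 hxm hym (by norm_num : (0:ℝ) ≤ 1/2) (by norm_num : (0:ℝ) ≤ 1/2)
    (by norm_num)
  simp only [smul_eq_mul] at hmid
  rw [show (1/2 : ℝ) * x + 1/2 * (1-x) = 1/2 by ring] at hmid
  have hlow : ψ x ≥ 2 * ψ (1/2) - (|ψ 0| + |ψ 1|) := by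
    have := hupper (1-x) hym
    linarith
  have hup := hupper x hxm
  rw [abs_le]
  constructor
  · have : -(2*|ψ (1/2)|) ≤ 2 * ψ (1/2) := by
      have := neg_abs_le (ψ (1/2)); linarith
    linarith
  · have : (0:ℝ) ≤ 2*|ψ (1/2)| := by positivity
    linarith

lemma integrable_mul_beta {a b : ℝ} (ha : 0 < a) (hb : 0 < b) {q : ℝ → ℝ}
    (hq : AEStronglyMeasurable q (volume.restrict (Set.Ioo (0:ℝ) 1)))
    {C : ℝ} (hC : ∀ x ∈ Set.Ioo (0:ℝ) 1, |q x| ≤ C) :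
    IntegrableOn (fun x => q x * (x ^ (a-1) * (1-x) ^ (b-1) /
      (Real.Gamma a * Real.Gamma b / Real.Gamma (a+b)))) (Set.Ioo 0 1) := by
  have h1 : IntegrableOn (fun x => q x * (x ^ (a-1) * (1-x) ^ (b-1))) (Set.Ioo 0 1) := by
    refine (betaKernel_integrableOn ha hb).bdd_mul (c := C) hq ?_
    filter_upwards [ae_restrict_mem measurableSet_Ioo] with x hx
    rw [Real.norm_eq_abs]
    exact hC x hx
  have heq : (fun x : ℝ => q x * (x ^ (a-1) * (1-x) ^ (b-1) /
      (Real.Gamma a * Real.Gamma b / Real.Gamma (a+b))))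
      = fun x => (q x * (x ^ (a-1) * (1-x) ^ (b-1))) /
        (Real.Gamma a * Real.Gamma b / Real.Gamma (a+b)) := by
    funext x; ring
  rw [heq]
  exact h1.div_const _

lemma convex_line_interior {ψ : ℝ → ℝ} (hψ : ConvexOn ℝ (Set.Icc 0 1) ψ)
    {a b x : ℝ} (ha : a ∈ Set.Icc (0:ℝ) 1) (hb : b ∈ Set.Icc (0:ℝ) 1)
    (hab : a < b) (hax : a ≤ x) (hxb : x ≤ b) :
    ψ x ≤ ψ a + (ψ b - ψ a) / (b - a) * (x - a) := by
  have hba : b - a ≠ 0 := by linarith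
  have h1 : 0 ≤ (b - x)/(b-a) := div_nonneg (by linarith) (by linarith)
  have h2 : 0 ≤ (x - a)/(b-a) := div_nonneg (by linarith) (by linarith)
  have h3 : (b-x)/(b-a) + (x-a)/(b-a) = 1 := by field_simp; ring
  have key := hψ.2 ha hb h1 h2 h3
  rw [smul_eq_mul, smul_eq_mul] at key
  have hx' : (b-x)/(b-a) * a + (x-a)/(b-a) * b = x := by field_simp; ring
  rw [hx'] at key
  calc ψ x ≤ (b-x)/(b-a) * ψ a + (x-a)/(b-a) * ψ b := key
    _ = ψ a + (ψ b - ψ a)/(b-a) * (x-a) := by field_simp; ring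

lemma convex_line_left {ψ : ℝ → ℝ} (hψ : ConvexOn ℝ (Set.Icc 0 1) ψ)
    {a b x : ℝ} (hx : x ∈ Set.Icc (0:ℝ) 1) (hb : b ∈ Set.Icc (0:ℝ) 1)
    (hxa : x ≤ a) (hab : a < b) :
    ψ a + (ψ b - ψ a) / (b - a) * (x - a) ≤ ψ x := by
  rcases eq_or_lt_of_le hxa with rfl|h
  · simp
  · have key := hψ.slope_mono_adjacent hx hb h hab
    have hax : 0 < a - x := by linarith
    have hba : 0 < b - a := by linarith
    rw [div_le_div_iff₀ hax hba] at key
    have key2 : (ψ b - ψ a) / (b - a) * (x - a) ≤ ψ x - ψ a := by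
      rw [div_mul_eq_mul_div, div_le_iff₀ hba]
      nlinarith [key]
    linarith

lemma convex_line_right {ψ : ℝ → ℝ} (hψ : ConvexOn ℝ (Set.Icc 0 1) ψ)
    {a b x : ℝ} (hx : x ∈ Set.Icc (0:ℝ) 1) (ha : a ∈ Set.Icc (0:ℝ) 1)
    (hbx : b ≤ x) (hab : a < b) :
    ψ a + (ψ b - ψ a) / (b - a) * (x - a) ≤ ψ x := by
  have hba : 0 < b - a := by linarith
  rcases eq_or_lt_of_le hbx with rfl|h
  · rw [div_mul_cancel₀ _ (by linarith : b - a ≠ 0)]; linarith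
  · have key := hψ.slope_mono_adjacent ha hx hab h
    have hxb : 0 < x - b := by linarith
    rw [div_le_div_iff₀ hba hxb] at key
    have key2 : (ψ b - ψ a) / (b - a) * (x - b) ≤ ψ x - ψ b := by
      rw [div_mul_eq_mul_div, div_le_iff₀ hba]
      nlinarith [key]
    have hexp : (ψ b - ψ a) / (b - a) * (x - a)
        = (ψ b - ψ a) + (ψ b - ψ a)/(b-a) * (x - b) := by
      field_simp
      ring
    rw [hexp]
    linarith

lemma concaveOn_log_one_sub : ConcaveOn ℝ (Set.Ioo (0:ℝ) 1) (fun x => Real.log (1 - x)) := by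
  constructor
  · exact convex_Ioo 0 1
  · intro x hx y hy s t hs ht hst
    have h1x : (0:ℝ) < 1 - x := by linarith [hx.2]
    have h1y : (0:ℝ) < 1 - y := by linarith [hy.2]
    have hlog := (strictConcaveOn_log_Ioi.concaveOn).2 (Set.mem_Ioi.2 h1x)
      (Set.mem_Ioi.2 h1y) hs ht hst
    simp only [smul_eq_mul] at hlog ⊢
    rw [show 1 - (s * x + t * y) = s * (1-x) + t * (1-y) by linear_combination -hst]
    exact hlog

lemma crossing_convex_ineq {f f' : ℝ → ℝ} {m : ℝ} {ψ : ℝ → ℝ}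
    (hψ : ConvexOn ℝ (Set.Icc 0 1) ψ)
    {a b : ℝ} (ha01 : a ∈ Set.Icc (0:ℝ) 1) (hb01 : b ∈ Set.Icc (0:ℝ) 1) (hab : a < b)
    (hin : ∀ x ∈ Set.Ioo (0:ℝ) 1, a < x → x < b → f x ≤ f' x)
    (hout : ∀ x ∈ Set.Ioo (0:ℝ) 1, x < a ∨ b < x → f' x ≤ f x)
    (hIf : IntegrableOn f (Set.Ioo 0 1)) (hIf' : IntegrableOn f' (Set.Ioo 0 1))
    (hIxf : IntegrableOn (fun x => x * f x) (Set.Ioo 0 1))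
    (hIxf' : IntegrableOn (fun x => x * f' x) (Set.Ioo 0 1))
    (hIψf : IntegrableOn (fun x => ψ x * f x) (Set.Ioo 0 1))
    (hIψf' : IntegrableOn (fun x => ψ x * f' x) (Set.Ioo 0 1))
    (hf1 : ∫ x in Set.Ioo (0:ℝ) 1, f x = 1) (hf'1 : ∫ x in Set.Ioo (0:ℝ) 1, f' x = 1)
    (hmf : ∫ x in Set.Ioo (0:ℝ) 1, x * f x = m)
    (hmf' : ∫ x in Set.Ioo (0:ℝ) 1, x * f' x = m) :
    ∫ x in Set.Ioo (0:ℝ) 1, ψ x * f' x ≤ ∫ x in Set.Ioo (0:ℝ) 1, ψ x * f x := by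
  set s := (ψ b - ψ a) / (b - a) with hs_def
  set L := fun x : ℝ => ψ a + s * (x - a) with hL_def
  have hLa : L a = ψ a := by simp [hL_def]
  have hLb : L b = ψ b := by
    simp only [hL_def, hs_def]
    rw [div_mul_cancel₀ _ (by linarith : b - a ≠ 0)]
    ring
  have hsign : ∀ x ∈ Set.Ioo (0:ℝ) 1, 0 ≤ (ψ x - L x) * (f x - f' x) := by
    intro x hx
    have hx01 : x ∈ Set.Icc (0:ℝ) 1 := Set.Ioo_subset_Icc_self hx
    rcases eq_or_ne x a with rfl|hxa
    · rw [hLa, sub_self, zero_mul]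
    rcases eq_or_ne x b with rfl|hxb
    · rw [hLb, sub_self, zero_mul]
    rcases lt_or_ge x a with h|h
    · exact mul_nonneg (sub_nonneg.2 (convex_line_left hψ hx01 hb01 h.le hab))
        (sub_nonneg.2 (hout x hx (Or.inl h)))
    rcases lt_or_ge b x with h'|h'
    · exact mul_nonneg (sub_nonneg.2 (convex_line_right hψ hx01 ha01 h'.le hab))
        (sub_nonneg.2 (hout x hx (Or.inr h')))
    · have h1 : ψ x - L x ≤ 0 :=
        sub_nonpos.2 (convex_line_interior hψ ha01 hb01 hab h h')
      have h2 : f x - f' x ≤ 0 :=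
        sub_nonpos.2 (hin x hx (h.lt_of_ne (Ne.symm hxa)) (h'.lt_of_ne hxb))
      nlinarith [h1, h2]
  have key : 0 ≤ ∫ x in Set.Ioo (0:ℝ) 1, (ψ x - L x) * (f x - f' x) :=
    setIntegral_nonneg measurableSet_Ioo hsign
  have hILf : IntegrableOn (fun x => L x * f x) (Set.Ioo 0 1) := by
    have : (fun x => L x * f x)
        = fun x => (ψ a - s * a) * f x + s * (x * f x) := by
      funext x; simp only [hL_def]; ring
    rw [this]
    exact (hIf.const_mul _).add (hIxf.const_mul _)
  have hILf' : IntegrableOn (fun x => L x * f' x) (Set.Ioo 0 1) := by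
    have : (fun x => L x * f' x)
        = fun x => (ψ a - s * a) * f' x + s * (x * f' x) := by
      funext x; simp only [hL_def]; ring
    rw [this]
    exact (hIf'.const_mul _).add (hIxf'.const_mul _)
  have hVf : ∫ x in Set.Ioo (0:ℝ) 1, L x * f x = (ψ a - s * a) + s * m := by
    have : (fun x => L x * f x)
        = fun x => (ψ a - s * a) * f x + s * (x * f x) := by
      funext x; simp only [hL_def]; ring
    rw [this, integral_add (hIf.const_mul _) (hIxf.const_mul _),
      integral_const_mul, integral_const_mul, hf1, hmf]
    ring
  have hVf' : ∫ x in Set.Ioo (0:ℝ) 1, L x * f' x = (ψ a - s * a) + s * m := by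
    have : (fun x => L x * f' x)
        = fun x => (ψ a - s * a) * f' x + s * (x * f' x) := by
      funext x; simp only [hL_def]; ring
    rw [this, integral_add (hIf'.const_mul _) (hIxf'.const_mul _),
      integral_const_mul, integral_const_mul, hf'1, hmf']
    ring
  have expand : ∫ x in Set.Ioo (0:ℝ) 1, (ψ x - L x) * (f x - f' x)
      = ((∫ x in Set.Ioo (0:ℝ) 1, ψ x * f x) - ∫ x in Set.Ioo (0:ℝ) 1, L x * f x)
        - ((∫ x in Set.Ioo (0:ℝ) 1, ψ x * f' x) - ∫ x in Set.Ioo (0:ℝ) 1, L x * f' x) := by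
    have e1 : (fun x => (ψ x - L x) * (f x - f' x))
        = fun x => (ψ x * f x - L x * f x) - (ψ x * f' x - L x * f' x) := by
      funext x; ring
    have A : IntegrableOn (fun x => ψ x * f x - L x * f x) (Set.Ioo 0 1) := hIψf.sub hILf
    have A' : IntegrableOn (fun x => ψ x * f' x - L x * f' x) (Set.Ioo 0 1) :=
      hIψf'.sub hILf'
    rw [e1, integral_sub A A', integral_sub hIψf hILf, integral_sub hIψf' hILf']
  rw [expand, hVf, hVf'] at key
  linarith

end Helpers

/-- The Beta(α,β) distribution on [0,1]. -/
noncomputable def betaMeasure (a b : ℝ) : Measure ℝ :=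
  (volume.restrict (Set.Ioo (0:ℝ) 1)).withDensity
    (fun x => ENNReal.ofReal (x ^ (a - 1) * (1 - x) ^ (b - 1) /
      (Real.Gamma a * Real.Gamma b / Real.Gamma (a + b))))

section Conv
open Set
open scoped ENNReal NNReal

lemma betaMeasure_integral {a b : ℝ} (ha : 0 < a) (hb : 0 < b) (ψ : ℝ → ℝ) :
    ∫ x, ψ x ∂(betaMeasure a b)
      = ∫ x in Set.Ioo (0:ℝ) 1,
          ψ x * (x ^ (a-1) * (1-x) ^ (b-1) / (Real.Gamma a * Real.Gamma b / Real.Gamma (a+b))) := by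
  have hcont : ContinuousOn (fun x : ℝ =>
      (x ^ (a-1) * (1-x) ^ (b-1) / (Real.Gamma a * Real.Gamma b / Real.Gamma (a+b))).toNNReal)
      (Set.Ioo 0 1) := by
    apply Continuous.comp_continuousOn continuous_real_toNNReal
    apply ContinuousOn.div_const
    apply ContinuousOn.mul
    · intro x hx
      exact (Real.continuousAt_rpow_const x (a-1) (Or.inl hx.1.ne')).continuousWithinAt
    · intro x hx
      have hne : (1:ℝ) - x ≠ 0 := by
        have := hx.2; intro h; nlinarith
      exact (((Real.continuousAt_rpow_const (1-x) (b-1) (Or.inl hne)).comp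
        ((by fun_prop : Continuous fun x : ℝ => 1 - x)).continuousAt)).continuousWithinAt
  have hmeas := hcont.aemeasurable (μ := volume) measurableSet_Ioo
  rw [betaMeasure,
    show (fun x : ℝ => ENNReal.ofReal (x ^ (a - 1) * (1 - x) ^ (b - 1) /
      (Real.Gamma a * Real.Gamma b / Real.Gamma (a + b))))
      = fun x : ℝ => ((x ^ (a - 1) * (1 - x) ^ (b - 1) /
      (Real.Gamma a * Real.Gamma b / Real.Gamma (a + b))).toNNReal : ℝ≥0∞) from rfl,
    integral_withDensity_eq_integral_smul₀ hmeas]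
  refine setIntegral_congr_fun measurableSet_Ioo (fun x hx => ?_)
  have hρ : 0 ≤ x ^ (a-1) * (1-x) ^ (b-1) / (Real.Gamma a * Real.Gamma b / Real.Gamma (a+b)) := by
    apply div_nonneg
    · exact mul_nonneg (Real.rpow_nonneg hx.1.le _) (Real.rpow_nonneg (by linarith [hx.2]) _)
    · exact div_nonneg (mul_nonneg (Real.Gamma_pos_of_pos ha).le
        (Real.Gamma_pos_of_pos hb).le) (Real.Gamma_pos_of_pos (by linarith)).le
  simp only [NNReal.smul_def, Real.coe_toNNReal _ hρ, smul_eq_mul]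
  ring

end Conv

/-- If `α < α'`, `β < β'` and the means agree, then `Beta(α',β') ≤_cvx Beta(α,β)`. -/
theorem beta_convex_order (α β α' β' : ℝ) (hα : 0 < α) (hβ : 0 < β)
    (hα' : 0 < α') (hβ' : 0 < β') (h1 : α < α') (h2 : β < β')
    (hmean : α / (α + β) = α' / (α' + β'))
    (ψ : ℝ → ℝ) (hψ : ConvexOn ℝ (Set.Icc 0 1) ψ) :
    ∫ x, ψ x ∂(betaMeasure α' β') ≤ ∫ x, ψ x ∂(betaMeasure α β) := by
  classical
  rw [betaMeasure_integral hα hβ ψ, betaMeasure_integral hα' hβ' ψ]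
  set B : ℝ := Real.Gamma α * Real.Gamma β / Real.Gamma (α + β) with hB_def
  set B' : ℝ := Real.Gamma α' * Real.Gamma β' / Real.Gamma (α' + β') with hB'_def
  have hBpos : 0 < B := div_pos (mul_pos (Real.Gamma_pos_of_pos hα) (Real.Gamma_pos_of_pos hβ))
    (Real.Gamma_pos_of_pos (by linarith))
  have hB'pos : 0 < B' := div_pos (mul_pos (Real.Gamma_pos_of_pos hα')
    (Real.Gamma_pos_of_pos hβ')) (Real.Gamma_pos_of_pos (by linarith))
  set f : ℝ → ℝ := fun x => x ^ (α-1) * (1-x) ^ (β-1) / B with hf_def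
  set f' : ℝ → ℝ := fun x => x ^ (α'-1) * (1-x) ^ (β'-1) / B' with hf'_def
  set p : ℝ := α' - α with hp_def
  set q : ℝ := β' - β with hq_def
  have hp : 0 < p := by rw [hp_def]; linarith
  have hq : 0 < q := by rw [hq_def]; linarith
  set d : ℝ := Real.log (B'/B) with hd_def
  -- the comparison function
  have hiff : ∀ x ∈ Set.Ioo (0:ℝ) 1,
      (f x ≤ f' x ↔ d ≤ p * Real.log x + q * Real.log (1-x)) := by
    intro x hx
    have hx0 : (0:ℝ) < x := hx.1
    have h1x : (0:ℝ) < 1 - x := by linarith [hx.2]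
    have hρpos : 0 < x ^ (α-1) * (1-x) ^ (β-1) :=
      mul_pos (Real.rpow_pos_of_pos hx0 _) (Real.rpow_pos_of_pos h1x _)
    have ht : 0 < x ^ p * (1-x) ^ q :=
      mul_pos (Real.rpow_pos_of_pos hx0 _) (Real.rpow_pos_of_pos h1x _)
    have hsplit : x ^ (α'-1) * (1-x) ^ (β'-1)
        = (x ^ (α-1) * (1-x) ^ (β-1)) * (x ^ p * (1-x) ^ q) := by
      rw [show α' - 1 = (α - 1) + p by rw [hp_def]; ring,
        show β' - 1 = (β - 1) + q by rw [hq_def]; ring,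
        Real.rpow_add hx0, Real.rpow_add h1x]
      ring
    simp only [hf_def, hf'_def]
    rw [div_le_div_iff₀ hBpos hB'pos, hsplit,
      show x ^ (α-1) * (1-x) ^ (β-1) * (x ^ p * (1-x) ^ q) * B
        = x ^ (α-1) * (1-x) ^ (β-1) * ((x ^ p * (1-x) ^ q) * B) by ring,
      mul_le_mul_iff_right₀ hρpos, ← div_le_iff₀ hBpos,
      ← Real.log_le_log_iff (div_pos hB'pos hBpos) ht,
      Real.log_mul (Real.rpow_pos_of_pos hx0 p).ne' (Real.rpow_pos_of_pos h1x q).ne',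
      Real.log_rpow hx0, Real.log_rpow h1x]
  -- basic integrability and integrals
  have hρint : IntegrableOn (fun x : ℝ => x ^ (α-1) * (1-x) ^ (β-1)) (Set.Ioo 0 1) :=
    betaKernel_integrableOn hα hβ
  have hρ'int : IntegrableOn (fun x : ℝ => x ^ (α'-1) * (1-x) ^ (β'-1)) (Set.Ioo 0 1) :=
    betaKernel_integrableOn hα' hβ'
  have hIf : IntegrableOn f (Set.Ioo 0 1) := hρint.div_const _
  have hIf' : IntegrableOn f' (Set.Ioo 0 1) := hρ'int.div_const _
  have hf1 : ∫ x in Set.Ioo (0:ℝ) 1, f x = 1 := by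
    simp only [hf_def]
    rw [integral_div, betaKernel_integral hα hβ, ← hB_def, div_self hBpos.ne']
  have hf'1 : ∫ x in Set.Ioo (0:ℝ) 1, f' x = 1 := by
    simp only [hf'_def]
    rw [integral_div, betaKernel_integral hα' hβ', ← hB'_def, div_self hB'pos.ne']
  have hmf : ∫ x in Set.Ioo (0:ℝ) 1, x * f x = α / (α + β) := by
    simp only [hf_def]
    have : (fun x : ℝ => x * (x ^ (α-1) * (1-x) ^ (β-1) / B))
        = fun x : ℝ => (x * (x ^ (α-1) * (1-x) ^ (β-1))) / B := by
      funext x; ring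
    rw [this, integral_div, betaKernel_integral_mul hα hβ, ← hB_def, mul_div_assoc,
      div_self hBpos.ne', mul_one]
  have hmf' : ∫ x in Set.Ioo (0:ℝ) 1, x * f' x = α / (α + β) := by
    simp only [hf'_def]
    have : (fun x : ℝ => x * (x ^ (α'-1) * (1-x) ^ (β'-1) / B'))
        = fun x : ℝ => (x * (x ^ (α'-1) * (1-x) ^ (β'-1))) / B' := by
      funext x; ring
    rw [this, integral_div, betaKernel_integral_mul hα' hβ', ← hB'_def, mul_div_assoc,
      div_self hB'pos.ne', mul_one, hmean]
  -- integrability of the ψ and x products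
  have hψcont : ContinuousOn ψ (Set.Ioo 0 1) := by
    have := hψ.continuousOn_interior
    rwa [interior_Icc] at this
  have hψm : AEStronglyMeasurable ψ (volume.restrict (Set.Ioo (0:ℝ) 1)) :=
    hψcont.aestronglyMeasurable measurableSet_Ioo
  have hψbd := convexOn_abs_bounded hψ
  have hIψf : IntegrableOn (fun x => ψ x * f x) (Set.Ioo 0 1) := by
    simp only [hf_def]
    exact integrable_mul_beta hα hβ hψm
      (fun x hx => hψbd x (Set.Ioo_subset_Icc_self hx))
  have hIψf' : IntegrableOn (fun x => ψ x * f' x) (Set.Ioo 0 1) := by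
    simp only [hf'_def]
    exact integrable_mul_beta hα' hβ' hψm
      (fun x hx => hψbd x (Set.Ioo_subset_Icc_self hx))
  have hidm : AEStronglyMeasurable (fun x : ℝ => x) (volume.restrict (Set.Ioo (0:ℝ) 1)) :=
    continuous_id.aestronglyMeasurable
  have hidbd : ∀ x ∈ Set.Ioo (0:ℝ) 1, |x| ≤ 1 := by
    intro x hx
    rw [abs_le]
    constructor <;> [linarith [hx.1]; linarith [hx.2]]
  have hIxf : IntegrableOn (fun x => x * f x) (Set.Ioo 0 1) := by
    simp only [hf_def]
    exact integrable_mul_beta hα hβ hidm hidbd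
  have hIxf' : IntegrableOn (fun x => x * f' x) (Set.Ioo 0 1) := by
    simp only [hf'_def]
    exact integrable_mul_beta hα' hβ' hidm hidbd
  -- the crossing set S
  set S : Set ℝ := {x | x ∈ Set.Ioo (0:ℝ) 1 ∧ d ≤ p * Real.log x + q * Real.log (1-x)}
    with hS_def
  have hconc : ConcaveOn ℝ (Set.Ioo (0:ℝ) 1)
      (fun x => p * Real.log x + q * Real.log (1-x)) := by
    have c1 : ConcaveOn ℝ (Set.Ioo (0:ℝ) 1) Real.log :=
      (strictConcaveOn_log_Ioi.concaveOn).subset (fun x hx => hx.1) (convex_Ioo 0 1)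
    exact (c1.smul hp.le).add (concaveOn_log_one_sub.smul hq.le)
  have hSconv : Convex ℝ S := hconc.convex_ge d
  -- S contains two distinct points
  have htwo : ∃ u ∈ S, ∃ v ∈ S, u < v := by
    by_contra hcon
    push_neg at hcon
    have hsub : S.Subsingleton := by
      intro u hu v hv
      have hA := hcon u hu v hv
      have hB2 := hcon v hv u hu
      linarith
    have hnull : volume S = 0 := hsub.measure_zero _
    have hg0 : ∫ x in Set.Ioo (0:ℝ) 1, (f x - f' x) = 0 := by
      rw [integral_sub hIf hIf', hf1, hf'1, sub_self]
    have hae : ∀ᵐ x ∂(volume.restrict (Set.Ioo (0:ℝ) 1)), x ∉ S := by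
      apply ae_restrict_of_ae
      exact (measure_eq_zero_iff_ae_notMem).mp hnull
    have hnonneg : ∀ᵐ x ∂(volume.restrict (Set.Ioo (0:ℝ) 1)), 0 < f x - f' x := by
      filter_upwards [hae, ae_restrict_mem measurableSet_Ioo] with x hxS hx
      have hnd : ¬ (d ≤ p * Real.log x + q * Real.log (1-x)) := fun hd => hxS ⟨hx, hd⟩
      have : ¬ (f x ≤ f' x) := fun hle => hnd ((hiff x hx).1 hle)
      have := not_le.1 this
      linarith
    have heq : (fun x => f x - f' x) =ᵐ[volume.restrict (Set.Ioo (0:ℝ) 1)] 0 :=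
      (integral_eq_zero_iff_of_nonneg_ae
        (by filter_upwards [hnonneg] with x hx using hx.le) (hIf.sub hIf')).mp hg0
    have hfalse : ∀ᵐ x ∂(volume.restrict (Set.Ioo (0:ℝ) 1)), False := by
      filter_upwards [heq, hnonneg] with x hx1 hx2
      rw [Pi.zero_apply] at hx1
      linarith
    rw [MeasureTheory.ae_iff] at hfalse
    simp only [not_false_eq_true, Set.setOf_true] at hfalse
    rw [Measure.restrict_apply_univ, Real.volume_Ioo] at hfalse
    norm_num at hfalse
  obtain ⟨u, hu, v, hv, huv⟩ := htwo
  have hSsub : S ⊆ Set.Ioo (0:ℝ) 1 := fun x hx => hx.1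
  have hSne : S.Nonempty := ⟨u, hu⟩
  have hbddb : BddBelow S := ⟨0, fun y hy => (hSsub hy).1.le⟩
  have hbdda : BddAbove S := ⟨1, fun y hy => (hSsub hy).2.le⟩
  set a : ℝ := sInf S with ha_def
  set b : ℝ := sSup S with hb_def2
  have hau : a ≤ u := csInf_le hbddb hu
  have hvb : v ≤ b := le_csSup hbdda hv
  have hab : a < b := lt_of_le_of_lt hau (lt_of_lt_of_le huv hvb)
  have ha01 : a ∈ Set.Icc (0:ℝ) 1 :=
    ⟨le_csInf hSne (fun y hy => (hSsub hy).1.le), hau.trans (hSsub hu).2.le⟩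
  have hb01 : b ∈ Set.Icc (0:ℝ) 1 :=
    ⟨(hSsub hv).1.le.trans hvb, csSup_le hSne (fun y hy => (hSsub hy).2.le)⟩
  have hmemS : ∀ x, a < x → x < b → x ∈ S := by
    intro x hax hxb
    obtain ⟨y, hyS, hyx⟩ := exists_lt_of_csInf_lt hSne hax
    obtain ⟨z, hzS, hxz⟩ := exists_lt_of_lt_csSup hSne hxb
    exact hSconv.ordConnected.out hyS hzS ⟨hyx.le, hxz.le⟩
  have hin : ∀ x ∈ Set.Ioo (0:ℝ) 1, a < x → x < b → f x ≤ f' x := by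
    intro x hx hax hxb
    exact (hiff x hx).2 (hmemS x hax hxb).2
  have hout : ∀ x ∈ Set.Ioo (0:ℝ) 1, x < a ∨ b < x → f' x ≤ f x := by
    intro x hx hor
    have hxS : x ∉ S := by
      rcases hor with h|h
      · exact fun hxS => absurd (csInf_le hbddb hxS) (not_le.2 h)
      · exact fun hxS => absurd (le_csSup hbdda hxS) (not_le.2 h)
    have hnd : ¬ (d ≤ p * Real.log x + q * Real.log (1-x)) := fun hd => hxS ⟨hx, hd⟩
    have : ¬ (f x ≤ f' x) := fun hle => hnd ((hiff x hx).1 hle)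
    exact (not_le.1 this).le
  exact crossing_convex_ineq hψ ha01 hb01 hab hin hout hIf hIf' hIxf hIxf' hIψf hIψf'
    hf1 hf'1 hmf hmf'
end

section
/- Two real random variables X, Y with E[X] = E[Y] satisfy X ≤_cvx Y (i.e., E[ψ(X)] ≤ E[ψ(Y)] for all convex ψ such that the expectations exist) if and only if for all x ∈ ℝ, ∫_{-∞}^x F_X(t) dt ≤ ∫_{-∞}^x F_Y(t) dt < ∞, where F_X, F_Y are the cumulative distribution functions of X and Y. -/
open MeasureTheory ProbabilityTheory Set Filter Topology
open scoped ENNReal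

namespace CvxOrderAux

/-! ### Subgradients and tangent lines of a convex function on ℝ -/

noncomputable def sg (ψ : ℝ → ℝ) (a : ℝ) : ℝ :=
  sInf ((fun b => (ψ b - ψ a) / (b - a)) '' Set.Ioi a)

noncomputable def tl (ψ : ℝ → ℝ) (a u : ℝ) : ℝ := ψ a + sg ψ a * (u - a)

noncomputable def cp (ψ : ℝ → ℝ) (a b : ℝ) : ℝ :=
  if sg ψ a = sg ψ b then b
  else (ψ b - ψ a + sg ψ a * a - sg ψ b * b) / (sg ψ a - sg ψ b)

section ConvexFacts

variable {ψ : ℝ → ℝ} (hψ : ConvexOn ℝ Set.univ ψ)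
include hψ

lemma slope_le_slope {c a b : ℝ} (hca : c < a) (hab : a < b) :
    (ψ a - ψ c) / (a - c) ≤ (ψ b - ψ a) / (b - a) :=
  hψ.slope_mono_adjacent (mem_univ c) (mem_univ b) hca hab

lemma sg_le_slope {a b : ℝ} (hab : a < b) : sg ψ a ≤ (ψ b - ψ a) / (b - a) := by
  apply csInf_le
  · refine ⟨(ψ a - ψ (a-1)) / (a - (a-1)), ?_⟩
    rintro x ⟨y, hy, rfl⟩
    exact slope_le_slope hψ (by linarith) hy
  · exact ⟨b, hab, rfl⟩

lemma slope_le_sg {c a : ℝ} (hca : c < a) : (ψ a - ψ c) / (a - c) ≤ sg ψ a := by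
  refine le_csInf ⟨_, ⟨a+1, by simp, rfl⟩⟩ ?_
  rintro x ⟨y, hy, rfl⟩
  exact slope_le_slope hψ hca hy

lemma tangent_le (a u : ℝ) : tl ψ a u ≤ ψ u := by
  rw [tl]
  rcases lt_trichotomy u a with h | rfl | h
  · have h1 := slope_le_sg hψ h
    rw [div_le_iff₀ (by linarith)] at h1
    nlinarith
  · simp
  · have h1 := sg_le_slope hψ h
    rw [le_div_iff₀ (by linarith)] at h1
    nlinarith

lemma sg_mono {a b : ℝ} (hab : a ≤ b) : sg ψ a ≤ sg ψ b := by
  rcases eq_or_lt_of_le hab with rfl | h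
  · exact le_refl _
  · exact (sg_le_slope hψ h).trans (slope_le_sg hψ h)

/-- parallel tangents of a convex function coincide -/
lemma tl_eq_of_sg_eq {a b : ℝ} (hs : sg ψ a = sg ψ b) : tl ψ a = tl ψ b := by
  have h1 : tl ψ a b ≤ ψ b := tangent_le hψ a b
  have h2 : tl ψ b a ≤ ψ a := tangent_le hψ b a
  funext u
  simp only [tl, hs] at *
  nlinarith [h1, h2]

lemma cp_key {a b : ℝ} (hab : a < b) :
    (a ≤ cp ψ a b) ∧
    (∀ u ≤ cp ψ a b, tl ψ b u ≤ tl ψ a u) ∧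
    (∀ u, cp ψ a b ≤ u → tl ψ b u = tl ψ a u + (sg ψ b - sg ψ a) * (u - cp ψ a b)) := by
  by_cases hs : sg ψ a = sg ψ b
  · rw [cp, if_pos hs, tl_eq_of_sg_eq hψ hs]
    exact ⟨hab.le, fun u _ => le_refl _, fun u _ => by rw [hs]; ring⟩
  · have hlt : sg ψ a < sg ψ b := lt_of_le_of_ne (sg_mono hψ hab.le) hs
    rw [cp, if_neg hs]
    set t := (ψ b - ψ a + sg ψ a * a - sg ψ b * b) / (sg ψ a - sg ψ b) with ht
    have hne : sg ψ a - sg ψ b ≠ 0 := by linarith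
    have key : ∀ u, tl ψ b u - tl ψ a u = (sg ψ b - sg ψ a) * (u - t) := by
      intro u
      rw [ht]
      simp only [tl]
      field_simp
      ring
    refine ⟨?_, fun u hu => ?_, fun u hu => ?_⟩
    · have h2 : tl ψ b a ≤ ψ a := tangent_le hψ b a
      have h3 : tl ψ a a = ψ a := by simp [tl]
      have := key a
      nlinarith
    · have := key u; nlinarith
    · have := key u; linarith

lemma tl_le_tl {c a u : ℝ} (hca : c ≤ a) (hau : a ≤ u) : tl ψ c u ≤ tl ψ a u := by
  have h1 : tl ψ c a ≤ ψ a := tangent_le hψ c a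
  have h2 : sg ψ c ≤ sg ψ a := sg_mono hψ hca
  simp only [tl] at *
  nlinarith

lemma sup'_tl_eq {S : Finset ℝ} (hS : S.Nonempty) {u : ℝ} (hu : S.max' hS ≤ u) :
    S.sup' hS (fun c => tl ψ c u) = tl ψ (S.max' hS) u := by
  apply le_antisymm
  · apply Finset.sup'_le
    intro c hc
    exact tl_le_tl hψ (S.le_max' c hc) hu
  · exact Finset.le_sup' (fun c => tl ψ c u) (S.max'_mem hS)

lemma max_sup'_tl {S : Finset ℝ} (hS : S.Nonempty) {b : ℝ} (hb : S.max' hS < b) (u : ℝ) :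
    max (S.sup' hS (fun c => tl ψ c u)) (tl ψ b u) =
      S.sup' hS (fun c => tl ψ c u) +
        (sg ψ b - sg ψ (S.max' hS)) * max (u - cp ψ (S.max' hS) b) 0 := by
  set a := S.max' hS with ha
  obtain ⟨h1, h2, h3⟩ := cp_key hψ hb
  rcases le_or_gt u (cp ψ a b) with hu | hu
  · rw [max_eq_left, max_eq_right (by linarith), mul_zero, add_zero]
    exact (h2 u hu).trans (Finset.le_sup' (fun c => tl ψ c u) (S.max'_mem hS))
  · have hMa : S.sup' hS (fun c => tl ψ c u) = tl ψ a u :=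
      sup'_tl_eq hψ hS (le_trans h1 hu.le)
    have hcoef : 0 ≤ sg ψ b - sg ψ a := by
      have := sg_mono hψ hb.le; linarith
    have hnn : (0:ℝ) ≤ (sg ψ b - sg ψ a) * (u - cp ψ a b) :=
      mul_nonneg hcoef (by linarith)
    rw [hMa, max_eq_left (by linarith : (0:ℝ) ≤ u - cp ψ a b), h3 u hu.le,
      max_eq_right (by linarith)]

end ConvexFacts

/-! ### dyadic grids -/

noncomputable def grid (n : ℕ) : Finset ℝ :=
  (Finset.Icc (-(n:ℤ) * 2^n) ((n:ℤ) * 2^n)).image (fun j : ℤ => ((j:ℝ)/2^n : ℝ))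

lemma grid_nonempty (n : ℕ) : (grid n).Nonempty := by
  refine ⟨0, Finset.mem_image.2 ⟨0, ?_, by simp⟩⟩
  simp only [Finset.mem_Icc]
  have h : (0:ℤ) ≤ (n:ℤ)*2^n := by positivity
  constructor <;> linarith

lemma grid_subset_succ (n : ℕ) : grid n ⊆ grid (n+1) := by
  intro x hx
  obtain ⟨j, hj, rfl⟩ := Finset.mem_image.1 hx
  simp only [Finset.mem_Icc] at hj
  refine Finset.mem_image.2 ⟨2*j, ?_, ?_⟩
  · simp only [Finset.mem_Icc]
    have h2 : (0:ℤ) < 2^n := by positivity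
    constructor <;> [skip; skip] <;> push_cast <;> ring_nf <;> nlinarith [hj.1, hj.2, h2]
  · push_cast
    have h2 : (2:ℝ)^n ≠ 0 := by positivity
    field_simp
    ring

lemma grid_mono : Monotone grid :=
  monotone_nat_of_le_succ grid_subset_succ

noncomputable def Mn (ψ : ℝ → ℝ) (n : ℕ) (u : ℝ) : ℝ :=
  (grid n).sup' (grid_nonempty n) (fun a => tl ψ a u)

section MnFacts

variable {ψ : ℝ → ℝ} (hψ : ConvexOn ℝ Set.univ ψ)
include hψ

lemma Mn_le_psi (n : ℕ) (u : ℝ) : Mn ψ n u ≤ ψ u :=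
  Finset.sup'_le _ _ fun a _ => tangent_le hψ a u

omit hψ in
lemma Mn_mono {m n : ℕ} (hmn : m ≤ n) (u : ℝ) : Mn ψ m u ≤ Mn ψ n u :=
  Finset.sup'_mono (fun a => tl ψ a u) (grid_mono hmn) (grid_nonempty m)

lemma Mn_tendsto (u : ℝ) : Tendsto (fun n => Mn ψ n u) atTop (𝓝 (ψ u)) := by
  set K := 2*|sg ψ u| + |sg ψ (u+1)| with hK
  have hK0 : 0 ≤ K := by positivity
  have lower : ∀ n : ℕ, (⌈|u|⌉₊ + 1 : ℕ) ≤ n → ψ u - K * (1/2)^n ≤ Mn ψ n u := by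
    intro n hn
    have hun : |u| + 1 ≤ (n : ℝ) := by
      have h1 : |u| ≤ (⌈|u|⌉₊ : ℝ) := Nat.le_ceil _
      have h2 : (⌈|u|⌉₊ : ℝ) + 1 ≤ (n : ℝ) := by exact_mod_cast hn
      linarith
    set j : ℤ := ⌈u * 2^n⌉ with hj
    have h2n : (0:ℝ) < 2^n := by positivity
    have hjl : u * 2^n ≤ (j:ℝ) := Int.le_ceil _
    have hju : (j:ℝ) < u * 2^n + 1 := Int.ceil_lt_add_one _
    have h2nge : (1:ℝ) ≤ 2^n := one_le_pow₀ (by norm_num)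
    have hmem : ((j:ℝ)/2^n) ∈ grid n := by
      refine Finset.mem_image.2 ⟨j, Finset.mem_Icc.2 ⟨?_, ?_⟩, rfl⟩
      · have : -(n:ℝ) * 2^n ≤ (j:ℝ) := by nlinarith [abs_le.1 (le_refl |u|), neg_abs_le u]
        exact_mod_cast this
      · have : (j:ℝ) ≤ (n:ℝ) * 2^n := by nlinarith [le_abs_self u]
        exact_mod_cast this
    set a := (j:ℝ)/2^n with ha
    have hua : u ≤ a := by rw [ha, le_div_iff₀ h2n]; linarith [mul_comm u ((2:ℝ)^n)]
    have had : a - u ≤ (1/2)^n := by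
      rw [ha]
      rw [div_sub' (ne_of_gt h2n), div_le_iff₀ h2n]
      have : ((1:ℝ)/2)^n * 2^n = 1 := by
        rw [← mul_pow]; norm_num
      nlinarith [hju]
    have hau1 : a ≤ u + 1 := by
      have : ((1:ℝ)/2)^n ≤ 1 := pow_le_one₀ (by norm_num) (by norm_num)
      linarith
    have hs1 : sg ψ u ≤ sg ψ a := sg_mono hψ hua
    have hs2 : sg ψ a ≤ sg ψ (u+1) := sg_mono hψ hau1
    have htang : ψ u + sg ψ u * (a - u) ≤ ψ a := by
      have := tangent_le hψ u a
      simp only [tl] at this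
      linarith
    have hprod : (sg ψ a - sg ψ u) * (a - u) ≤ K * (1/2)^n := by
      have h5 : sg ψ a - sg ψ u ≤ K := by
        have := le_abs_self (sg ψ (u+1))
        have := neg_abs_le (sg ψ u)
        have := le_abs_self (sg ψ u)
        rw [hK]; linarith
      have h6 : 0 ≤ a - u := by linarith
      have h7 : 0 ≤ sg ψ a - sg ψ u := by linarith
      exact mul_le_mul h5 had h6 hK0
    have : ψ u - K * (1/2)^n ≤ tl ψ a u := by
      simp only [tl]
      nlinarith [htang, hprod]
    exact this.trans (Finset.le_sup' (fun c => tl ψ c u) hmem)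
  refine tendsto_of_tendsto_of_tendsto_of_le_of_le'
    (g := fun n => ψ u - K * (1/2)^n) (h := fun _ => ψ u) ?_ tendsto_const_nhds ?_ ?_
  · have hpow : Tendsto (fun n : ℕ => ((1:ℝ)/2)^n) atTop (𝓝 0) :=
      tendsto_pow_atTop_nhds_zero_of_lt_one (by norm_num) (by norm_num)
    have := (hpow.const_mul K).neg.const_add (ψ u)
    simpa [sub_eq_add_neg] using this
  · exact eventually_atTop.2 ⟨_, lower⟩
  · exact Eventually.of_forall fun n => Mn_le_psi hψ n u

end MnFacts

/-! ### integral inequalities -/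

section Integrals

variable {ψ : ℝ → ℝ} (hψ : ConvexOn ℝ Set.univ ψ)
variable {Ω : Type*} [MeasurableSpace Ω] (P : Measure Ω) [IsProbabilityMeasure P]
variable {X Y : Ω → ℝ} (hIX : Integrable X P) (hIY : Integrable Y P)
  (hmean : ∫ ω, X ω ∂P = ∫ ω, Y ω ∂P)
  (H' : ∀ t : ℝ, ∫ ω, max (X ω - t) 0 ∂P ≤ ∫ ω, max (Y ω - t) 0 ∂P)

include hψ hIX hIY hmean H'

omit hψ hIX hIY hmean H' in
lemma sup'_split {S : Finset ℝ} (hS : S.Nonempty) {b : ℝ} (hb : b = S.max' hS)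
    (hS' : (S.erase b).Nonempty) (f : ℝ → ℝ) :
    S.sup' hS f = max ((S.erase b).sup' hS' f) (f b) := by
  apply le_antisymm
  · apply Finset.sup'_le
    intro c hc
    rcases eq_or_ne c b with rfl | hne
    · exact le_max_right _ _
    · exact le_trans (Finset.le_sup' f (Finset.mem_erase.2 ⟨hne, hc⟩)) (le_max_left _ _)
  · apply max_le
    · apply Finset.sup'_le
      intro c hc
      exact Finset.le_sup' f (Finset.mem_of_mem_erase hc)
    · exact Finset.le_sup' f (hb ▸ S.max'_mem hS)

lemma lemA : ∀ (n : ℕ) (S : Finset ℝ) (hS : S.Nonempty), S.card = n + 1 →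
    Integrable (fun ω => S.sup' hS (fun a => tl ψ a (X ω))) P ∧
    Integrable (fun ω => S.sup' hS (fun a => tl ψ a (Y ω))) P ∧
    ∫ ω, S.sup' hS (fun a => tl ψ a (X ω)) ∂P ≤ ∫ ω, S.sup' hS (fun a => tl ψ a (Y ω)) ∂P := by
  intro n
  induction n with
  | zero =>
    intro S hS hcard
    obtain ⟨c, rfl⟩ := Finset.card_eq_one.1 hcard
    simp only [Finset.sup'_singleton]
    have iX : Integrable (fun ω => tl ψ c (X ω)) P := by
      simp only [tl]
      exact (integrable_const _).add ((hIX.sub (integrable_const c)).const_mul _)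
    have iY : Integrable (fun ω => tl ψ c (Y ω)) P := by
      simp only [tl]
      exact (integrable_const _).add ((hIY.sub (integrable_const c)).const_mul _)
    refine ⟨iX, iY, le_of_eq ?_⟩
    have hint : ∀ (Z : Ω → ℝ), Integrable Z P →
        ∫ ω, tl ψ c (Z ω) ∂P = ψ c + sg ψ c * ((∫ ω, Z ω ∂P) - c) := by
      intro Z hZ
      have h2 : Integrable (fun ω => sg ψ c * (Z ω - c)) P :=
        (hZ.sub (integrable_const c)).const_mul _
      simp only [tl]
      rw [integral_add (integrable_const _) h2, integral_const_mul,
        integral_sub hZ (integrable_const c), integral_const]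
      simp
    rw [hint X hIX, hint Y hIY, hmean]
  | succ n ih =>
    intro S hS hcard
    set b := S.max' hS with hb
    have hbmem : b ∈ S := S.max'_mem hS
    set S' := S.erase b with hS'def
    have hcard' : S'.card = n + 1 := by
      rw [hS'def, Finset.card_erase_of_mem hbmem, hcard]
      omega
    have hS' : S'.Nonempty := Finset.card_pos.1 (by omega)
    set a := S'.max' hS' with ha
    have hab : a < b := by
      have h1 : a ∈ S' := S'.max'_mem hS'
      have h2 : a ≠ b := (Finset.mem_erase.1 h1).1
      exact lt_of_le_of_ne (S.le_max' a (Finset.mem_of_mem_erase h1)) h2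
    set t := cp ψ a b with htdef
    set coef := sg ψ b - sg ψ a with hcoef
    have hcoef0 : 0 ≤ coef := by
      have := sg_mono hψ hab.le; rw [hcoef]; linarith
    have key : ∀ u, S.sup' hS (fun c => tl ψ c u) =
        S'.sup' hS' (fun c => tl ψ c u) + coef * max (u - t) 0 := by
      intro u
      rw [sup'_split hS hb hS' (fun c => tl ψ c u), max_sup'_tl hψ hS' hab u]
    obtain ⟨iX', iY', hle⟩ := ih S' hS' hcard'
    have hingeX : Integrable (fun ω => max (X ω - t) 0) P :=
      (hIX.sub (integrable_const t)).pos_part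
    have hingeY : Integrable (fun ω => max (Y ω - t) 0) P :=
      (hIY.sub (integrable_const t)).pos_part
    have eqX : (fun ω => S.sup' hS (fun c => tl ψ c (X ω))) =
        fun ω => S'.sup' hS' (fun c => tl ψ c (X ω)) + coef * max (X ω - t) 0 :=
      funext fun ω => key (X ω)
    have eqY : (fun ω => S.sup' hS (fun c => tl ψ c (Y ω))) =
        fun ω => S'.sup' hS' (fun c => tl ψ c (Y ω)) + coef * max (Y ω - t) 0 :=
      funext fun ω => key (Y ω)
    rw [eqX, eqY]
    have hcX : Integrable (fun ω => coef * max (X ω - t) 0) P := hingeX.const_mul _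
    have hcY : Integrable (fun ω => coef * max (Y ω - t) 0) P := hingeY.const_mul _
    refine ⟨iX'.add hcX, iY'.add hcY, ?_⟩
    rw [integral_add iX' hcX, integral_add iY' hcY, integral_const_mul, integral_const_mul]
    exact add_le_add hle (mul_le_mul_of_nonneg_left (H' t) hcoef0)

lemma lemA' (n : ℕ) :
    Integrable (fun ω => Mn ψ n (X ω)) P ∧
    Integrable (fun ω => Mn ψ n (Y ω)) P ∧
    ∫ ω, Mn ψ n (X ω) ∂P ≤ ∫ ω, Mn ψ n (Y ω) ∂P := by
  obtain ⟨k, hk⟩ : ∃ k, (grid n).card = k + 1 :=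
    ⟨(grid n).card - 1, (Nat.succ_pred_eq_of_pos (Finset.card_pos.2 (grid_nonempty n))).symm⟩
  exact lemA hψ P hIX hIY hmean H' k (grid n) (grid_nonempty n) hk

/-- The backward core: hinge inequalities imply the convex-order inequality. -/
lemma backward_core (hψX : Integrable (fun ω => ψ (X ω)) P)
    (hψY : Integrable (fun ω => ψ (Y ω)) P) :
    ∫ ω, ψ (X ω) ∂P ≤ ∫ ω, ψ (Y ω) ∂P := by
  have habs : ∀ (Z : Ω → ℝ) (n : ℕ) (ω : Ω),
      ‖Mn ψ n (Z ω)‖ ≤ |Mn ψ 0 (Z ω)| + |ψ (Z ω)| := by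
    intro Z n ω
    rw [Real.norm_eq_abs, abs_le]
    constructor
    · have h1 := Mn_mono (ψ := ψ) (Nat.zero_le n) (Z ω)
      have h2 := neg_abs_le (Mn ψ 0 (Z ω))
      have h3 := abs_nonneg (ψ (Z ω))
      linarith
    · have h1 := Mn_le_psi hψ n (Z ω)
      have h2 := le_abs_self (ψ (Z ω))
      have h3 := abs_nonneg (Mn ψ 0 (Z ω))
      linarith
  have hXlim : Tendsto (fun n => ∫ ω, Mn ψ n (X ω) ∂P) atTop (𝓝 (∫ ω, ψ (X ω) ∂P)) := by
    refine tendsto_integral_of_dominated_convergence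
      (fun ω => |Mn ψ 0 (X ω)| + |ψ (X ω)|)
      (fun n => (lemA' hψ P hIX hIY hmean H' n).1.aestronglyMeasurable)
      (((lemA' hψ P hIX hIY hmean H' 0).1.abs).add hψX.abs)
      (fun n => Eventually.of_forall fun ω => habs X n ω)
      (Eventually.of_forall fun ω => Mn_tendsto hψ (X ω))
  have hYlim : Tendsto (fun n => ∫ ω, Mn ψ n (Y ω) ∂P) atTop (𝓝 (∫ ω, ψ (Y ω) ∂P)) := by
    refine tendsto_integral_of_dominated_convergence
      (fun ω => |Mn ψ 0 (Y ω)| + |ψ (Y ω)|)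
      (fun n => (lemA' hψ P hIX hIY hmean H' n).2.1.aestronglyMeasurable)
      (((lemA' hψ P hIX hIY hmean H' 0).2.1.abs).add hψY.abs)
      (fun n => Eventually.of_forall fun ω => habs Y n ω)
      (Eventually.of_forall fun ω => Mn_tendsto hψ (Y ω))
  exact le_of_tendsto_of_tendsto' hXlim hYlim
    (fun n => (lemA' hψ P hIX hIY hmean H' n).2.2)

end Integrals

section CDF

variable {Ω : Type*} [MeasurableSpace Ω] (P : Measure Ω) [IsProbabilityMeasure P]

lemma cdf_lintegral (Z : Ω → ℝ) (hZ : Measurable Z) (hIZ : Integrable Z P) (x : ℝ) :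
    ∫⁻ t in Iic x, ENNReal.ofReal (cdf (P.map Z) t) =
      ENNReal.ofReal (∫ ω, max (x - Z ω) 0 ∂P) := by
  have hprob : IsProbabilityMeasure (P.map Z) := Measure.isProbabilityMeasure_map hZ.aemeasurable
  set μ := P.map Z with hμ
  have step1 : ∫⁻ t in Iic x, ENNReal.ofReal (cdf μ t) = ∫⁻ t in Iic x, μ (Iic t) := by
    apply lintegral_congr
    intro t
    exact ofReal_cdf μ t
  have hSmeas : MeasurableSet {p : ℝ × ℝ | p.2 ≤ p.1} :=
    measurableSet_le measurable_snd measurable_fst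
  have step2 : ∫⁻ t in Iic x, μ (Iic t) =
      ∫⁻ u, ENNReal.ofReal (max (x - u) 0) ∂μ := by
    have huncurry : Function.uncurry (fun t u => (Iic t).indicator (1 : ℝ → ℝ≥0∞) u) =
        {p : ℝ × ℝ | p.2 ≤ p.1}.indicator (fun _ => 1) := by
      funext p
      by_cases h : p.2 ≤ p.1 <;>
        simp [Function.uncurry, Set.indicator, h, Set.mem_Iic]
    have hswap0 := lintegral_lintegral_swap (μ := volume.restrict (Iic x)) (ν := μ)
      (f := fun t u => (Iic t).indicator (1 : ℝ → ℝ≥0∞) u)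
      (by rw [huncurry]; exact (measurable_one.indicator hSmeas).aemeasurable)
    have hswap : ∫⁻ t in Iic x, ∫⁻ u, (Iic t).indicator (1 : ℝ → ℝ≥0∞) u ∂μ =
        ∫⁻ u, (∫⁻ t in Iic x, (Iic t).indicator (1 : ℝ → ℝ≥0∞) u) ∂μ := hswap0
    calc ∫⁻ t in Iic x, μ (Iic t)
        = ∫⁻ t in Iic x, ∫⁻ u, (Iic t).indicator (1 : ℝ → ℝ≥0∞) u ∂μ := by
          apply lintegral_congr
          intro t
          rw [lintegral_indicator_one measurableSet_Iic]
      _ = ∫⁻ u, (∫⁻ t in Iic x, (Iic t).indicator (1 : ℝ → ℝ≥0∞) u) ∂μ := hswap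
      _ = ∫⁻ u, ENNReal.ofReal (max (x - u) 0) ∂μ := by
          apply lintegral_congr
          intro u
          have hind : ∀ t : ℝ, (Iic t).indicator (1 : ℝ → ℝ≥0∞) u =
              (Ici u).indicator (1 : ℝ → ℝ≥0∞) t := by
            intro t
            by_cases h : u ≤ t <;> simp [Set.indicator, h, Set.mem_Iic, Set.mem_Ici]
          calc ∫⁻ t in Iic x, (Iic t).indicator (1 : ℝ → ℝ≥0∞) u
              = ∫⁻ t in Iic x, (Ici u).indicator (1 : ℝ → ℝ≥0∞) t := by
                apply lintegral_congr; intro t; exact hind t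
            _ = (volume.restrict (Iic x)) (Ici u) := by
                rw [lintegral_indicator_one measurableSet_Ici]
            _ = volume (Icc u x) := by
                rw [Measure.restrict_apply measurableSet_Ici, Set.Ici_inter_Iic]
            _ = ENNReal.ofReal (max (x - u) 0) := by
                rw [Real.volume_Icc]
                rcases le_total (x - u) 0 with h | h
                · rw [max_eq_right h, ENNReal.ofReal_eq_zero.2 h, ENNReal.ofReal_zero]
                · rw [max_eq_left h]
  have step3 : ∫⁻ u, ENNReal.ofReal (max (x - u) 0) ∂μ =
      ∫⁻ ω, ENNReal.ofReal (max (x - Z ω) 0) ∂P := by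
    rw [hμ]
    exact lintegral_map (ENNReal.measurable_ofReal.comp
      (((measurable_const.sub measurable_id).max measurable_const))) hZ
  have hint : Integrable (fun ω => max (x - Z ω) 0) P :=
    ((integrable_const x).sub hIZ).pos_part
  have step4 : ∫⁻ ω, ENNReal.ofReal (max (x - Z ω) 0) ∂P =
      ENNReal.ofReal (∫ ω, max (x - Z ω) 0 ∂P) :=
    (ofReal_integral_eq_lintegral_ofReal hint
      (Eventually.of_forall fun ω => le_max_right _ _)).symm
  rw [step1, step2, step3, step4]

end CDF

lemma convexOn_affine (a b : ℝ) : ConvexOn ℝ Set.univ (fun u : ℝ => a*u + b) := by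
  constructor
  · exact convex_univ
  · intro x _ y _ s t hs ht hst
    simp only [smul_eq_mul]
    apply le_of_eq
    linear_combination (-b) * hst

lemma convexOn_hinge_left (x : ℝ) : ConvexOn ℝ Set.univ (fun u : ℝ => max (x - u) 0) := by
  have h := (convexOn_affine (-1) x).sup (convexOn_affine 0 0)
  have heq : (fun u : ℝ => max (x - u) 0) =
      (fun u : ℝ => (-1)*u + x) ⊔ (fun u : ℝ => 0*u + 0) := by
    funext u
    simp only [Pi.sup_apply]
    change max (x - u) 0 = max ((-1)*u + x) (0*u + 0)
    congr 1 <;> ring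
  rw [heq]
  exact h

end CvxOrderAux

open CvxOrderAux

/-- Characterization of the convex order via integrated cumulative distribution functions. -/
theorem convex_order_iff_integrated_cdf
    {Ω : Type*} [MeasurableSpace Ω] (P : Measure Ω) [IsProbabilityMeasure P]
    (X Y : Ω → ℝ) (hX : Measurable X) (hY : Measurable Y)
    (hIX : Integrable X P) (hIY : Integrable Y P)
    (hmean : ∫ ω, X ω ∂P = ∫ ω, Y ω ∂P) :
    (∀ ψ : ℝ → ℝ, ConvexOn ℝ Set.univ ψ →
        Integrable (fun ω => ψ (X ω)) P → Integrable (fun ω => ψ (Y ω)) P →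
        ∫ ω, ψ (X ω) ∂P ≤ ∫ ω, ψ (Y ω) ∂P)
      ↔
    (∀ x : ℝ,
      (∫⁻ t in Set.Iic x, ENNReal.ofReal (cdf (Measure.map X P) t)) ≤
        (∫⁻ t in Set.Iic x, ENNReal.ofReal (cdf (Measure.map Y P) t)) ∧
      (∫⁻ t in Set.Iic x, ENNReal.ofReal (cdf (Measure.map Y P) t)) < ⊤) := by
  constructor
  · intro h x
    rw [cdf_lintegral P X hX hIX x, cdf_lintegral P Y hY hIY x]
    have hintX : Integrable (fun ω => max (x - X ω) 0) P :=
      ((integrable_const x).sub hIX).pos_part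
    have hintY : Integrable (fun ω => max (x - Y ω) 0) P :=
      ((integrable_const x).sub hIY).pos_part
    have hle := h (fun u => max (x - u) 0) (convexOn_hinge_left x) hintX hintY
    exact ⟨ENNReal.ofReal_le_ofReal hle, ENNReal.ofReal_lt_top⟩
  · intro h ψ hψ hψX hψY
    have H : ∀ x : ℝ, ∫ ω, max (x - X ω) 0 ∂P ≤ ∫ ω, max (x - Y ω) 0 ∂P := by
      intro x
      have h1 := (h x).1
      rw [cdf_lintegral P X hX hIX x, cdf_lintegral P Y hY hIY x] at h1
      exact (ENNReal.ofReal_le_ofReal_iff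
        (integral_nonneg fun ω => le_max_right _ _)).1 h1
    have H' : ∀ t : ℝ, ∫ ω, max (X ω - t) 0 ∂P ≤ ∫ ω, max (Y ω - t) 0 ∂P := by
      intro t
      have key : ∀ u : ℝ, max (u - t) 0 = max (t - u) 0 + (u - t) := by
        intro u
        rcases le_total u t with hut | hut
        · rw [max_eq_right (by linarith), max_eq_left (by linarith)]
          ring
        · rw [max_eq_left (by linarith), max_eq_right (by linarith)]
          ring
      have hX1 : Integrable (fun ω => max (t - X ω) 0) P :=
        ((integrable_const t).sub hIX).pos_part
      have hY1 : Integrable (fun ω => max (t - Y ω) 0) P :=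
        ((integrable_const t).sub hIY).pos_part
      have hX2 : Integrable (fun ω => X ω - t) P := hIX.sub (integrable_const t)
      have hY2 : Integrable (fun ω => Y ω - t) P := hIY.sub (integrable_const t)
      have eqX : (fun ω => max (X ω - t) 0) =
          fun ω => max (t - X ω) 0 + (X ω - t) := funext fun ω => key (X ω)
      have eqY : (fun ω => max (Y ω - t) 0) =
          fun ω => max (t - Y ω) 0 + (Y ω - t) := funext fun ω => key (Y ω)
      rw [eqX, eqY, integral_add hX1 hX2, integral_add hY1 hY2,
        integral_sub hIX (integrable_const t), integral_sub hIY (integrable_const t), hmean]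
      exact add_le_add_left (H t) _
    exact backward_core hψ P hIX hIY hmean H' hψX hψY
end

section
/- Let 0 < a₀ < a₁, δ = a₁ - a₀, and fix v > 0. Then the function h(u) = E[1/(a₁ - δ U_{u,v})] is convex on (0,1), where U_{u,v} ~ Beta(uv, (1-u)v). -/
open MeasureTheory Filter
open scoped ENNReal NNReal

noncomputable def bD (a b x : ℝ) : ℝ := x ^ (a - 1) * (1 - x) ^ (b - 1)
noncomputable def bB (a b : ℝ) : ℝ := Real.Gamma a * Real.Gamma b / Real.Gamma (a + b)

lemma measurable_bD (a b : ℝ) : Measurable (bD a b) := by unfold bD; fun_prop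

lemma bB_pos {a b : ℝ} (ha : 0 < a) (hb : 0 < b) : 0 < bB a b :=
  div_pos (mul_pos (Real.Gamma_pos_of_pos ha) (Real.Gamma_pos_of_pos hb))
    (Real.Gamma_pos_of_pos (by linarith))

lemma bD_nonneg {a b x : ℝ} (hx : x ∈ Set.Ioo (0:ℝ) 1) : 0 ≤ bD a b x :=
  mul_nonneg (Real.rpow_nonneg hx.1.le _) (Real.rpow_nonneg (by linarith [hx.2]) _)

lemma ofReal_eq_integrand {a b : ℝ} (x : ℝ) (hx : x ∈ Set.Icc (0:ℝ) 1) :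
    ((x ^ (a - 1) * (1 - x) ^ (b - 1) : ℝ) : ℂ)
      = (x:ℂ) ^ ((a:ℂ) - 1) * ((1:ℂ) - x) ^ ((b:ℂ) - 1) := by
  obtain ⟨h0, h1⟩ := hx
  push_cast
  rw [Complex.ofReal_cpow h0, Complex.ofReal_cpow (by linarith : (0:ℝ) ≤ 1 - x)]
  push_cast
  ring_nf

lemma realBetaIntegral {a b : ℝ} (ha : 0 < a) (hb : 0 < b) :
    ∫ x in (0:ℝ)..1, x ^ (a - 1) * (1 - x) ^ (b - 1)
      = Real.Gamma a * Real.Gamma b / Real.Gamma (a + b) := by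
  have h := Complex.Gamma_mul_Gamma_eq_betaIntegral (s := (a:ℂ)) (t := (b:ℂ))
    (by simpa using ha) (by simpa using hb)
  have hbeta : Complex.betaIntegral a b
      = ((∫ x in (0:ℝ)..1, x ^ (a - 1) * (1 - x) ^ (b - 1) : ℝ) : ℂ) := by
    rw [Complex.betaIntegral, ← intervalIntegral.integral_ofReal]
    refine intervalIntegral.integral_congr fun x hx => ?_
    rw [Set.uIcc_of_le (by norm_num : (0:ℝ) ≤ 1)] at hx
    exact (ofReal_eq_integrand x hx).symm
  rw [hbeta, ← Complex.ofReal_add, Complex.Gamma_ofReal, Complex.Gamma_ofReal,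
    Complex.Gamma_ofReal, ← Complex.ofReal_mul, ← Complex.ofReal_mul] at h
  have := Complex.ofReal_inj.mp h
  have hG : Real.Gamma (a + b) ≠ 0 := (Real.Gamma_pos_of_pos (by linarith)).ne'
  field_simp
  linarith [this]

lemma integrableOn_bD {a b : ℝ} (ha : 0 < a) (hb : 0 < b) :
    IntegrableOn (bD a b) (Set.Ioc (0:ℝ) 1) volume := by
  have h := (Complex.betaIntegral_convergent (u := (a:ℂ)) (v := (b:ℂ))
    (by simpa using ha) (by simpa using hb)).1
  have h2 : IntegrableOn (fun x : ℝ => ((bD a b x : ℝ) : ℂ)) (Set.Ioc (0:ℝ) 1) volume := by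
    refine h.congr_fun (fun x hx => ?_) measurableSet_Ioc
    exact (ofReal_eq_integrand x ⟨hx.1.le, hx.2⟩).symm
  simpa [Complex.ofReal_re, IntegrableOn] using h2.re

lemma setIntegral_bD {a b : ℝ} (ha : 0 < a) (hb : 0 < b) :
    ∫ x in Set.Ioo (0:ℝ) 1, bD a b x = bB a b := by
  have h := realBetaIntegral ha hb
  rw [intervalIntegral.integral_of_le (by norm_num : (0:ℝ) ≤ 1)] at h
  rw [← MeasureTheory.integral_Ioc_eq_integral_Ioo]
  exact h

lemma integral_betaMeasure {a b : ℝ} (ha : 0 < a) (hb : 0 < b) (g : ℝ → ℝ) :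
    ∫ x, g x ∂betaMeasure a b
      = ∫ x in Set.Ioo (0:ℝ) 1, g x * (bD a b x / bB a b) := by
  have hmeas : Measurable (fun x => (bD a b x / bB a b).toNNReal) :=
    ((measurable_bD a b).div_const _).real_toNNReal
  have : betaMeasure a b = (volume.restrict (Set.Ioo (0:ℝ) 1)).withDensity
      (fun x => ((bD a b x / bB a b).toNNReal : ℝ≥0∞)) := rfl
  rw [this, integral_withDensity_eq_integral_smul hmeas]
  refine setIntegral_congr_fun measurableSet_Ioo fun x hx => ?_
  have h1 : 0 ≤ bD a b x / bB a b := div_nonneg (bD_nonneg hx) (bB_pos ha hb).le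
  simp [NNReal.smul_def, Real.coe_toNNReal _ h1, mul_comm]

lemma Gamma_add_nat {s : ℝ} (hs : 0 < s) (k : ℕ) :
    Real.Gamma (s + k) = (∏ j ∈ Finset.range k, (s + j)) * Real.Gamma s := by
  induction k with
  | zero => simp
  | succ n ih =>
    have h : s + (n + 1 : ℕ) = (s + n) + 1 := by push_cast; ring
    rw [h, Real.Gamma_add_one (by positivity), ih, Finset.prod_range_succ]
    ring

lemma bB_ratio {a b : ℝ} (ha : 0 < a) (hb : 0 < b) (k : ℕ) :
    bB (a + k) b / bB a b = ∏ j ∈ Finset.range k, (a + j) / (a + b + j) := by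
  have hGa := Real.Gamma_pos_of_pos ha
  have hGb := Real.Gamma_pos_of_pos hb
  have hGab := Real.Gamma_pos_of_pos (show (0:ℝ) < a + b by linarith)
  have h1 : Real.Gamma (a + k) = (∏ j ∈ Finset.range k, (a + j)) * Real.Gamma a :=
    Gamma_add_nat ha k
  have h2 : Real.Gamma (a + k + b) = (∏ j ∈ Finset.range k, (a + b + j)) * Real.Gamma (a + b) := by
    have : a + k + b = (a + b) + k := by ring
    rw [this, Gamma_add_nat (by linarith) k]
  have hP2 : (0:ℝ) < ∏ j ∈ Finset.range k, (a + b + j) := by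
    apply Finset.prod_pos; intro j _; positivity
  rw [bB, bB, h1, h2, Finset.prod_div_distrib]
  field_simp

lemma moment_betaMeasure {a b : ℝ} (ha : 0 < a) (hb : 0 < b) (k : ℕ) :
    ∫ x, x ^ k ∂betaMeasure a b = ∏ j ∈ Finset.range k, (a + j) / (a + b + j) := by
  rw [integral_betaMeasure ha hb, ← bB_ratio ha hb k]
  have hcongr : ∀ x ∈ Set.Ioo (0:ℝ) 1,
      x ^ k * (bD a b x / bB a b) = bD (a + k) b x / bB a b := by
    intro x hx
    have hx0 : (0:ℝ) < x := hx.1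
    have : x ^ k * bD a b x = bD (a + k) b x := by
      rw [bD, bD, ← Real.rpow_natCast x k, ← mul_assoc, ← Real.rpow_add hx0]
      ring_nf
    rw [div_eq_mul_inv, div_eq_mul_inv, ← mul_assoc, this]
  rw [setIntegral_congr_fun measurableSet_Ioo hcongr, integral_div,
    setIntegral_bD (by positivity) hb]

-- pointwise geometric expansion
lemma pointwise_series {a₁ δ x : ℝ} (hδ0 : 0 ≤ δ) (hδ : δ < a₁) (hx : x ∈ Set.Ioo (0:ℝ) 1) :
    HasSum (fun k : ℕ => δ ^ k / a₁ ^ (k + 1) * x ^ k) ((a₁ - δ * x)⁻¹) := by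
  have ha₁ : 0 < a₁ := lt_of_le_of_lt hδ0 hδ
  have hrx : |δ / a₁ * x| < 1 := by
    rw [abs_of_nonneg (mul_nonneg (div_nonneg hδ0 ha₁.le) hx.1.le)]
    calc δ / a₁ * x ≤ δ / a₁ * 1 := by
          apply mul_le_mul_of_nonneg_left hx.2.le (by positivity)
      _ < 1 := by rw [mul_one, div_lt_one ha₁]; exact hδ
  have h := (hasSum_geometric_of_abs_lt_one hrx).mul_left a₁⁻¹
  have heq : ∀ k : ℕ, a₁⁻¹ * (δ / a₁ * x) ^ k = δ ^ k / a₁ ^ (k + 1) * x ^ k := by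
    intro k
    rw [pow_succ, mul_pow, div_pow]
    ring
  have heq2 : a₁⁻¹ * (1 - δ / a₁ * x)⁻¹ = (a₁ - δ * x)⁻¹ := by
    rw [← mul_inv]
    congr 1
    field_simp
  rw [heq2] at h
  exact h.congr_fun fun k => (heq k).symm

lemma ae_Ioo_betaMeasure (a b : ℝ) : ∀ᵐ x ∂betaMeasure a b, x ∈ Set.Ioo (0:ℝ) 1 :=
  (withDensity_absolutelyContinuous _ _).ae_le (ae_restrict_mem measurableSet_Ioo)

lemma betaMeasure_univ_lt_top {a b : ℝ} (ha : 0 < a) (hb : 0 < b) :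
    betaMeasure a b Set.univ < ∞ := by
  have hint : IntegrableOn (fun x => bD a b x / bB a b) (Set.Ioo (0:ℝ) 1) volume :=
    (((integrableOn_bD ha hb).mono_set Set.Ioo_subset_Ioc_self).div_const _)
  have h2 := hint.2   -- HasFiniteIntegral
  rw [betaMeasure, withDensity_apply _ MeasurableSet.univ, Measure.restrict_univ]
  calc ∫⁻ x, ENNReal.ofReal (x ^ (a-1) * (1-x) ^ (b-1) /
        (Real.Gamma a * Real.Gamma b / Real.Gamma (a+b))) ∂(volume.restrict (Set.Ioo (0:ℝ) 1))
      ≤ ∫⁻ x, ‖bD a b x / bB a b‖₊ ∂(volume.restrict (Set.Ioo (0:ℝ) 1)) := by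
        refine lintegral_mono fun x => ?_
        exact Real.ofReal_le_enorm _
    _ < ∞ := h2

lemma summable_c {a₁ δ : ℝ} (hδ0 : 0 ≤ δ) (hδ : δ < a₁) :
    Summable (fun k : ℕ => δ ^ k / a₁ ^ (k + 1)) := by
  have ha₁ : 0 < a₁ := lt_of_le_of_lt hδ0 hδ
  have h := (summable_geometric_of_lt_one (div_nonneg hδ0 ha₁.le)
    ((div_lt_one ha₁).mpr hδ)).mul_left a₁⁻¹
  refine h.congr fun k => ?_
  rw [pow_succ, div_pow]
  ring


lemma integral_inv_series {a b a₁ δ : ℝ} (ha : 0 < a) (hb : 0 < b)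
    (hδ0 : 0 ≤ δ) (hδ : δ < a₁) :
    ∫ x, (a₁ - δ * x)⁻¹ ∂betaMeasure a b
      = ∑' k : ℕ, δ ^ k / a₁ ^ (k + 1) * ∫ x, x ^ k ∂betaMeasure a b := by
  set μ := betaMeasure a b with hμ
  have hae : ∀ᵐ x ∂μ, x ∈ Set.Ioo (0:ℝ) 1 := ae_Ioo_betaMeasure a b
  have hc0 : ∀ k : ℕ, 0 ≤ δ ^ k / a₁ ^ (k + 1) := by
    intro k
    have ha₁ : 0 < a₁ := lt_of_le_of_lt hδ0 hδ
    positivity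
  have step1 : ∫ x, (a₁ - δ * x)⁻¹ ∂μ
      = ∫ x, ∑' k : ℕ, δ ^ k / a₁ ^ (k + 1) * x ^ k ∂μ := by
    refine integral_congr_ae (hae.mono fun x hx => ?_)
    exact ((pointwise_series hδ0 hδ hx).tsum_eq).symm
  have hmeas : ∀ k : ℕ, AEStronglyMeasurable (fun x : ℝ => δ ^ k / a₁ ^ (k + 1) * x ^ k) μ :=
    fun k => ((measurable_id.pow_const k).const_mul _).aestronglyMeasurable
  have hbound : ∑' k : ℕ, ∫⁻ x, ‖δ ^ k / a₁ ^ (k + 1) * x ^ k‖₊ ∂μ ≠ ∞ := by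
    have h1 : ∀ k : ℕ, ∫⁻ x, ‖δ ^ k / a₁ ^ (k + 1) * x ^ k‖₊ ∂μ
        ≤ ENNReal.ofReal (δ ^ k / a₁ ^ (k + 1)) * μ Set.univ := by
      intro k
      have : ∫⁻ x, ‖δ ^ k / a₁ ^ (k + 1) * x ^ k‖₊ ∂μ
          ≤ ∫⁻ _, ENNReal.ofReal (δ ^ k / a₁ ^ (k + 1)) ∂μ := by
        refine lintegral_mono_ae (hae.mono fun x hx => ?_)
        have hxk : x ^ k ≤ 1 := pow_le_one₀ hx.1.le hx.2.le
        have habs : |δ ^ k / a₁ ^ (k + 1) * x ^ k| ≤ δ ^ k / a₁ ^ (k + 1) := by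
          rw [abs_mul, abs_of_nonneg (hc0 k), abs_of_nonneg (pow_nonneg hx.1.le k)]
          calc δ ^ k / a₁ ^ (k + 1) * x ^ k ≤ δ ^ k / a₁ ^ (k + 1) * 1 :=
                mul_le_mul_of_nonneg_left hxk (hc0 k)
            _ = _ := mul_one _
        calc (‖δ ^ k / a₁ ^ (k + 1) * x ^ k‖₊ : ℝ≥0∞)
            = ENNReal.ofReal |δ ^ k / a₁ ^ (k + 1) * x ^ k| := by
              exact Real.enorm_eq_ofReal_abs _
          _ ≤ ENNReal.ofReal (δ ^ k / a₁ ^ (k + 1)) := ENNReal.ofReal_le_ofReal habs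
      simpa [lintegral_const] using this
    refine ne_top_of_le_ne_top ?_ (ENNReal.tsum_le_tsum h1)
    rw [ENNReal.tsum_mul_right, ← ENNReal.ofReal_tsum_of_nonneg hc0 (summable_c hδ0 hδ)]
    exact ENNReal.mul_ne_top ENNReal.ofReal_ne_top (betaMeasure_univ_lt_top ha hb).ne
  rw [step1, integral_tsum hmeas hbound]
  congr 1
  funext k
  rw [integral_const_mul]


lemma convexOn_affine {s : Set ℝ} (hs : Convex ℝ s) (c d : ℝ) :
    ConvexOn ℝ s (fun u => c * u + d) := by
  refine ⟨hs, fun x _ y _ a b ha hb hab => le_of_eq ?_⟩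
  simp only [smul_eq_mul]
  linear_combination (-d) * hab

lemma prodP {v : ℝ} (hv : 0 < v) (k : ℕ) :
    ConvexOn ℝ (Set.Ioo (0:ℝ) 1) (fun u => ∏ j ∈ Finset.range k, (u * v + j) / (v + j))
    ∧ MonotoneOn (fun u => ∏ j ∈ Finset.range k, (u * v + j) / (v + j)) (Set.Ioo (0:ℝ) 1)
    ∧ ∀ u ∈ Set.Ioo (0:ℝ) 1, 0 ≤ ∏ j ∈ Finset.range k, (u * v + j) / (v + j) := by
  induction k with
  | zero =>
    simp only [Finset.range_zero, Finset.prod_empty]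
    exact ⟨convexOn_const 1 (convex_Ioo 0 1), monotoneOn_const, fun u _ => zero_le_one⟩
  | succ n ih =>
    obtain ⟨ihc, ihm, ihn⟩ := ih
    have hvk : (0:ℝ) < v + n := by positivity
    set g : ℝ → ℝ := fun u => (u * v + n) / (v + n) with hgdef
    have hgeq : g = fun u => (v / (v + n)) * u + (n:ℝ) / (v + n) := by
      funext u; rw [hgdef]; field_simp
    have hgc : ConvexOn ℝ (Set.Ioo (0:ℝ) 1) g := by
      rw [hgeq]; exact convexOn_affine (convex_Ioo 0 1) _ _
    have hgm : MonotoneOn g (Set.Ioo (0:ℝ) 1) := by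
      intro x _ y _ hxy
      rw [hgdef]
      have : x * v + n ≤ y * v + n := by nlinarith
      exact div_le_div_of_nonneg_right this hvk.le |>.trans_eq rfl
    have hgn : ∀ u ∈ Set.Ioo (0:ℝ) 1, 0 ≤ g u := by
      intro u hu
      rw [hgdef]
      have := hu.1
      positivity
    have hsplit : (fun u => ∏ j ∈ Finset.range (n+1), (u * v + j) / (v + j))
        = (fun u => ∏ j ∈ Finset.range n, (u * v + j) / (v + j)) * g := by
      funext u
      simp only [Finset.prod_range_succ, Pi.mul_apply, hgdef]
    refine ⟨?_, ?_, ?_⟩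
    · rw [hsplit]
      exact ihc.mul hgc ihn hgn (ihm.monovaryOn hgm)
    · rw [hsplit]
      intro x hx y hy hxy
      exact mul_le_mul (ihm hx hy hxy) (hgm hx hy hxy) (hgn x hx) (ihn y hy)
    · intro u hu
      rw [Finset.prod_range_succ]
      exact mul_nonneg (ihn u hu) (hgn u hu)

lemma convexOn_of_tendsto {s : Set ℝ} (hs : Convex ℝ s) {f : ℕ → ℝ → ℝ} {g : ℝ → ℝ}
    (hf : ∀ n, ConvexOn ℝ s (f n))
    (hlim : ∀ x ∈ s, Tendsto (fun n => f n x) atTop (nhds (g x))) :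
    ConvexOn ℝ s g := by
  refine ⟨hs, fun x hx y hy a b ha hb hab => ?_⟩
  have hmem : a • x + b • y ∈ s := hs hx hy ha hb hab
  refine le_of_tendsto_of_tendsto' (hlim _ hmem)
    (((hlim x hx).const_mul a).add ((hlim y hy).const_mul b)) fun n => ?_
  simpa [smul_eq_mul] using (hf n).2 hx hy ha hb hab


/-- `u ↦ E[1/(a₁ - δ U_{u,v})]` is convex on `(0,1)`, where `δ = a₁ - a₀` and
`U_{u,v} ~ Beta(uv, (1-u)v)`. -/
theorem convexity_inverse_moment (a₀ a₁ v : ℝ) (ha₀ : 0 < a₀) (ha : a₀ < a₁) (hv : 0 < v) :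
    ConvexOn ℝ (Set.Ioo (0:ℝ) 1)
      (fun u => ∫ x, (a₁ - (a₁ - a₀) * x)⁻¹ ∂(betaMeasure (u * v) ((1 - u) * v))) := by
  set δ := a₁ - a₀ with hδdef
  have hδ0 : 0 ≤ δ := by simp [hδdef]; linarith
  have hδ : δ < a₁ := by simp [hδdef]; linarith
  have ha₁ : 0 < a₁ := by linarith
  set c : ℕ → ℝ := fun k => δ ^ k / a₁ ^ (k + 1) with hcdef
  set m : ℕ → ℝ → ℝ := fun k u => ∏ j ∈ Finset.range k, (u * v + j) / (v + j) with hmdef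
  have hc0 : ∀ k, 0 ≤ c k := fun k => by positivity
  have hm01 : ∀ k, ∀ u ∈ Set.Ioo (0:ℝ) 1, 0 ≤ m k u ∧ m k u ≤ 1 := by
    intro k u hu
    obtain ⟨hu0, hu1⟩ := hu
    constructor
    · apply Finset.prod_nonneg
      intro j _
      positivity
    · apply Finset.prod_le_one
      · intro j _; positivity
      · intro j _
        rw [div_le_one (by positivity)]
        nlinarith
  have key : ∀ u ∈ Set.Ioo (0:ℝ) 1,
      ∫ x, (a₁ - δ * x)⁻¹ ∂betaMeasure (u * v) ((1 - u) * v) = ∑' k, c k * m k u := by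
    intro u hu
    have hau : 0 < u * v := mul_pos hu.1 hv
    have hbu : 0 < (1 - u) * v := mul_pos (by linarith [hu.2]) hv
    rw [integral_inv_series hau hbu hδ0 hδ]
    congr 1
    funext k
    rw [moment_betaMeasure hau hbu k]
    simp only [hmdef]
    congr 1
    refine Finset.prod_congr rfl fun j _ => ?_
    rw [show u * v + (1 - u) * v = v from by ring]
  have hsum : ∀ u ∈ Set.Ioo (0:ℝ) 1, Summable (fun k => c k * m k u) := by
    intro u hu
    refine Summable.of_nonneg_of_le
      (fun k => mul_nonneg (hc0 k) (hm01 k u hu).1)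
      (fun k => ?_) (summable_c hδ0 hδ)
    calc c k * m k u ≤ c k * 1 := mul_le_mul_of_nonneg_left (hm01 k u hu).2 (hc0 k)
      _ = c k := mul_one _
  refine convexOn_of_tendsto (convex_Ioo 0 1)
    (f := fun N u => ∑ k ∈ Finset.range N, c k * m k u) (fun N => ?_) (fun u hu => ?_)
  · induction N with
    | zero => simpa using convexOn_const (0:ℝ) (convex_Ioo (0:ℝ) 1)
    | succ n ihn =>
      have hsplit : (fun u => ∑ k ∈ Finset.range (n+1), c k * m k u)
          = (fun u => ∑ k ∈ Finset.range n, c k * m k u) + (fun u => c n * m n u) := by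
        funext u
        simp [Finset.sum_range_succ]
      show ConvexOn ℝ (Set.Ioo (0:ℝ) 1) (fun u => ∑ k ∈ Finset.range (n+1), c k * m k u)
      rw [hsplit]
      refine ihn.add ?_
      exact ((prodP hv n).1).smul (hc0 n)
  · have h1 := (hsum u hu).hasSum.tendsto_sum_nat
    rw [key u hu]
    exact h1
end

section
/- Let ψ: ℝ → ℝ be strongly convex with parameter m > 0, and let X, Z be real random variables with E[Z | X] = 0 and E[ψ(X+Z)] = E[ψ(X)] (all expectations finite). Then Z = 0 almost surely. -/
open MeasureTheory

/-- If `ψ` is strongly convex, `E[Z | X] = 0` and `E[ψ(X+Z)] = E[ψ(X)]`, then `Z = 0`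
almost surely. -/
theorem ae_zero_of_strongConvex_eq
    {Ω : Type*} [m0 : MeasurableSpace Ω] (P : Measure Ω) [IsProbabilityMeasure P]
    (X Z : Ω → ℝ) (hX : Measurable X) (hZ : Measurable Z)
    (ψ : ℝ → ℝ) (m : ℝ) (hm : 0 < m) (hψ : StrongConvexOn Set.univ m ψ)
    (hZint : Integrable Z P)
    (hcond : P[Z | MeasurableSpace.comap X Real.measurableSpace] =ᵐ[P] 0)
    (hIX : Integrable (fun ω => ψ (X ω)) P)
    (hIXZ : Integrable (fun ω => ψ (X ω + Z ω)) P)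
    (heq : ∫ ω, ψ (X ω + Z ω) ∂P = ∫ ω, ψ (X ω) ∂P) :
    Z =ᵐ[P] 0 := by
  classical
  -- the convex residual function
  set g : ℝ → ℝ := fun x => ψ x - m / 2 * x ^ 2 with hgdef
  have hg : ConvexOn ℝ Set.univ g := by
    have := strongConvexOn_iff_convex.mp hψ
    simpa [hgdef, Real.norm_eq_abs, sq_abs] using this
  have hgc : Continuous g := by
    rw [← continuousOn_univ]
    exact hg.continuousOn isOpen_univ
  have hsec : ∀ x b b' : ℝ, b ≠ x → b' ≠ x → b ≤ b' →
      (g b - g x) / (b - x) ≤ (g b' - g x) / (b' - x) := fun x b b' hb hb' hbb' =>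
    hg.secant_mono (Set.mem_univ _) (Set.mem_univ _) (Set.mem_univ _) hb hb' hbb'
  -- a measurable subgradient of g via countable infimum of right slopes
  set c : ℝ → ℝ := fun x => ⨅ n : ℕ, (g (x + ((n : ℝ) + 1)⁻¹) - g x) * ((n : ℝ) + 1)
    with hcdef
  have hpos : ∀ n : ℕ, (0 : ℝ) < ((n : ℝ) + 1)⁻¹ := fun n => by positivity
  have hterm : ∀ (x : ℝ) (n : ℕ), (g (x + ((n : ℝ) + 1)⁻¹) - g x) * ((n : ℝ) + 1)
      = (g (x + ((n : ℝ) + 1)⁻¹) - g x) / ((x + ((n : ℝ) + 1)⁻¹) - x) := by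
    intro x n
    rw [add_sub_cancel_left, div_eq_mul_inv, inv_inv]
  have hbdd : ∀ x : ℝ, BddBelow
      (Set.range fun n : ℕ => (g (x + ((n : ℝ) + 1)⁻¹) - g x) * ((n : ℝ) + 1)) := by
    intro x
    refine ⟨(g (x - 1) - g x) / ((x - 1) - x), ?_⟩
    rintro _ ⟨n, rfl⟩
    dsimp only
    rw [hterm x n]
    exact hsec x (x - 1) (x + ((n : ℝ) + 1)⁻¹) (by intro h; nlinarith [h])
      (by have := hpos n; intro h; nlinarith [h]) (by have := hpos n; linarith)
  -- subgradient inequality for g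
  have hsub : ∀ x z : ℝ, g x + c x * z ≤ g (x + z) := by
    intro x z
    rcases lt_trichotomy z 0 with hz | hz | hz
    · -- z < 0 : slope at x+z is below all right slopes
      have hle : (g (x + z) - g x) / z ≤ c x := by
        refine le_ciInf fun n => ?_
        have h1 : (g (x + z) - g x) / ((x + z) - x)
            ≤ (g (x + ((n : ℝ) + 1)⁻¹) - g x) / ((x + ((n : ℝ) + 1)⁻¹) - x) :=
          hsec x (x + z) (x + ((n : ℝ) + 1)⁻¹) (by intro h; nlinarith [h])
            (by have := hpos n; intro h; nlinarith [h]) (by have := hpos n; linarith)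
        rw [hterm x n]
        simpa [add_sub_cancel_left] using h1
      have h2 : c x * z ≤ ((g (x + z) - g x) / z) * z :=
        mul_le_mul_of_nonpos_right hle hz.le
      rw [div_mul_cancel₀ _ hz.ne] at h2
      linarith
    · simp [hz]
    · -- z > 0 : some right slope is below the slope at x+z
      obtain ⟨n, hn⟩ := exists_nat_gt z⁻¹
      have hnz : ((n : ℝ) + 1)⁻¹ ≤ z := by
        have h1 : (0 : ℝ) < (n : ℝ) + 1 := by positivity
        rw [inv_le_comm₀ h1 hz]
        linarith
      have h1 : c x ≤ (g (x + ((n : ℝ) + 1)⁻¹) - g x) * ((n : ℝ) + 1) :=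
        ciInf_le (hbdd x) n
      have h2 : (g (x + ((n : ℝ) + 1)⁻¹) - g x) / ((x + ((n : ℝ) + 1)⁻¹) - x)
          ≤ (g (x + z) - g x) / ((x + z) - x) :=
        hsec x (x + ((n : ℝ) + 1)⁻¹) (x + z) (by have := hpos n; intro h; nlinarith [h])
          (by intro h; nlinarith [h]) (by linarith)
      rw [← hterm x n] at h2
      have h3 : c x ≤ (g (x + z) - g x) / z := by
        rw [add_sub_cancel_left] at h2; linarith
      have h4 : c x * z ≤ ((g (x + z) - g x) / z) * z :=
        mul_le_mul_of_nonneg_right h3 hz.le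
      rw [div_mul_cancel₀ _ hz.ne'] at h4
      linarith
  -- the subgradient of ψ
  set h : ℝ → ℝ := fun x => c x + m * x with hhdef
  have hkey : ∀ x z : ℝ, ψ x + h x * z + m / 2 * z ^ 2 ≤ ψ (x + z) := by
    intro x z
    have h1 := hsub x z
    simp only [hgdef, hhdef] at h1 ⊢
    nlinarith [h1]
  have hc_meas : Measurable c := by
    refine Measurable.iInf fun n => ?_
    exact (((hgc.comp (continuous_id.add continuous_const)).sub hgc).mul
      continuous_const).measurable
  have hh_meas : Measurable h := hc_meas.add (measurable_const.mul measurable_id)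
  -- truncation sets
  have hmX : MeasurableSpace.comap X Real.measurableSpace ≤ m0 := hX.comap_le
  set A : ℕ → Set Ω := fun N => {ω | |h (X ω)| ≤ N} with hAdef
  have hA_mX : ∀ N, MeasurableSet[MeasurableSpace.comap X Real.measurableSpace] (A N) := fun N =>
    ⟨{x | |h x| ≤ N}, measurableSet_le hh_meas.abs measurable_const, rfl⟩
  have hA_m0 : ∀ N, MeasurableSet[m0] (A N) := fun N => hmX _ (hA_mX N)
  have hA_mono : Monotone A := by
    intro N M hNM ω hω
    simp only [hAdef, Set.mem_setOf_eq] at hω ⊢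
    exact le_trans hω (Nat.cast_le.mpr hNM)
  have hA_univ : (⋃ N, A N) = Set.univ := by
    refine Set.eq_univ_of_forall fun ω => Set.mem_iUnion.2 ?_
    obtain ⟨N, hN⟩ := exists_nat_ge |h (X ω)|
    exact ⟨N, by simpa [hAdef] using hN⟩
  -- the truncated multiplier
  set f : ℕ → Ω → ℝ := fun N => (A N).indicator (fun ω => h (X ω)) with hfdef
  have hXmX : Measurable[MeasurableSpace.comap X Real.measurableSpace] X := fun s hs => ⟨s, hs, rfl⟩
  have hf_mX : ∀ N, StronglyMeasurable[MeasurableSpace.comap X Real.measurableSpace] (f N) := fun N =>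
    ((hh_meas.comp hXmX).indicator (hA_mX N)).stronglyMeasurable
  have hf_bound : ∀ N, ∀ ω, ‖f N ω‖ ≤ (N : ℝ) := by
    intro N ω
    by_cases hω : ω ∈ A N
    · rw [hfdef]; simp only [Set.indicator_of_mem hω, Real.norm_eq_abs]; exact hω
    · rw [hfdef]; simp [Set.indicator_of_notMem hω]
  have hfZ_int : ∀ N, Integrable (fun ω => f N ω * Z ω) P := fun N =>
    hZint.bdd_mul ((hf_mX N).mono hmX).aestronglyMeasurable
      (Filter.Eventually.of_forall (hf_bound N))
  -- step 1 : ∫ f N * Z = 0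
  have hstep1 : ∀ N, ∫ ω, f N ω * Z ω ∂P = 0 := by
    intro N
    have hpull : P[f N * Z | MeasurableSpace.comap X Real.measurableSpace] =ᵐ[P] f N * P[Z | MeasurableSpace.comap X Real.measurableSpace] :=
      condExp_stronglyMeasurable_mul_of_bound hmX (hf_mX N) hZint N
        (Filter.Eventually.of_forall (hf_bound N))
    have hz : f N * P[Z | MeasurableSpace.comap X Real.measurableSpace] =ᵐ[P] 0 := by
      filter_upwards [hcond] with ω hω
      simp [hω]
    calc ∫ ω, f N ω * Z ω ∂P
        = ∫ ω, (P[f N * Z | MeasurableSpace.comap X Real.measurableSpace]) ω ∂P := (integral_condExp hmX).symm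
      _ = ∫ ω, (0 : Ω → ℝ) ω ∂P := integral_congr_ae (hpull.trans hz)
      _ = 0 := by simp
  -- the gap function
  set u : Ω → ℝ := fun ω => ψ (X ω + Z ω) - ψ (X ω) with hudef
  have hu_int : Integrable u P := hIXZ.sub hIX
  have hu0 : ∫ ω, u ω ∂P = 0 := by
    rw [hudef]; rw [integral_sub hIXZ hIX, heq, sub_self]
  -- v N and w N
  set v : ℕ → Ω → ℝ := fun N ω => (A N).indicator u ω - f N ω * Z ω with hvdef
  set w : ℕ → Ω → ℝ := fun N => (A N).indicator (fun ω => m / 2 * Z ω ^ 2) with hwdef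
  have hv_int : ∀ N, Integrable (v N) P := fun N =>
    (hu_int.indicator (hA_m0 N)).sub (hfZ_int N)
  have hw_le_v : ∀ N ω, w N ω ≤ v N ω := by
    intro N ω
    by_cases hω : ω ∈ A N
    · have := hkey (X ω) (Z ω)
      simp only [hwdef, hvdef, hfdef, hudef, Set.indicator_of_mem hω]
      linarith
    · simp [hwdef, hvdef, hfdef, Set.indicator_of_notMem hω]
  have hw_nonneg : ∀ N ω, 0 ≤ w N ω := by
    intro N ω
    by_cases hω : ω ∈ A N
    · simp only [hwdef, Set.indicator_of_mem hω]; positivity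
    · simp [hwdef, Set.indicator_of_notMem hω]
  have hw_meas : ∀ N, Measurable[m0] (w N) := fun N =>
    ((measurable_const.mul (hZ.pow_const 2)).indicator (hA_m0 N))
  have hw_int : ∀ N, Integrable (w N) P := by
    intro N
    refine (hv_int N).mono' (hw_meas N).aestronglyMeasurable ?_
    refine Filter.Eventually.of_forall fun ω => ?_
    rw [Real.norm_eq_abs, abs_of_nonneg (hw_nonneg N ω)]
    exact hw_le_v N ω
  have hwv : ∀ N, ∫ ω, w N ω ∂P ≤ ∫ ω in A N, u ω ∂P := by
    intro N
    have h1 : ∫ ω, w N ω ∂P ≤ ∫ ω, v N ω ∂P :=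
      integral_mono (hw_int N) (hv_int N) (hw_le_v N)
    have h2 : ∫ ω, v N ω ∂P = ∫ ω in A N, u ω ∂P := by
      rw [hvdef]
      rw [integral_sub (hu_int.indicator (hA_m0 N)) (hfZ_int N), hstep1 N,
        integral_indicator (hA_m0 N), sub_zero]
    linarith [h1, h2.le, h2.ge]
  -- limit of the truncated integrals of u
  have htend : Filter.Tendsto (fun N => ∫ ω in A N, u ω ∂P) Filter.atTop (nhds 0) := by
    have := tendsto_setIntegral_of_monotone (μ := P) (f := u) hA_m0 hA_mono
      (by rw [hA_univ]; exact hu_int.integrableOn)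
    rw [hA_univ] at this
    simpa [hu0] using this
  -- monotonicity of ∫ w N
  have hw_mono : ∀ N M, N ≤ M → ∫ ω, w N ω ∂P ≤ ∫ ω, w M ω ∂P := by
    intro N M hNM
    refine integral_mono (hw_int N) (hw_int M) fun ω => ?_
    exact Set.indicator_le_indicator_of_subset (hA_mono hNM)
      (fun ω => by positivity) ω
  -- each ∫ w N vanishes
  have hwzero : ∀ N, w N =ᵐ[P] 0 := by
    intro N
    have hle0 : ∫ ω, w N ω ∂P ≤ 0 := by
      refine ge_of_tendsto htend ?_
      filter_upwards [Filter.eventually_ge_atTop N] with M hM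
      exact (hw_mono N M hM).trans (hwv M)
    have hge0 : 0 ≤ ∫ ω, w N ω ∂P :=
      integral_nonneg (hw_nonneg N)
    exact (integral_eq_zero_iff_of_nonneg (hw_nonneg N) (hw_int N)).mp
      (le_antisymm hle0 hge0)
  have hall : ∀ᵐ ω ∂P, ∀ N, w N ω = 0 := ae_all_iff.mpr hwzero
  filter_upwards [hall] with ω hω
  obtain ⟨N, hN⟩ := exists_nat_ge |h (X ω)|
  have hmem : ω ∈ A N := hN
  have h0 := hω N
  rw [hwdef] at h0
  simp only [Set.indicator_of_mem hmem] at h0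
  have : Z ω ^ 2 = 0 := by
    by_contra hne
    have : 0 < Z ω ^ 2 := lt_of_le_of_ne (sq_nonneg _) (Ne.symm hne)
    nlinarith
  simpa using pow_eq_zero_iff (n := 2) (by norm_num) |>.mp this
end

section
/- Let f: (0,1) × (0,∞) → ℝ be such that for each fixed u, v ↦ f(u,v) is strictly increasing; suppose there is an open interval I ⊂ (0,1) such that for u ∈ I, f(u,v) < 0 for small v and f(u,v) > 0 for large v, while for u ∉ closure(I), f(u,v) < 0 for all v. Then there exists a function v_c: (0,1) → [0,∞] with domain of finiteness I such that f(u,v) < 0 iff v < v_c(u) and f(u,v) > 0 iff v > v_c(u). Moreover, if additionally u ↦ f(u,v) is concave for each v, then v_c is quasi-convex on (0,1). -/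
open Set ENNReal Filter Topology

/-- Existence of the critical curve `v_c` separating negativity and positivity regions of
`f(u,v)`, and its quasi-convexity when `f` is concave in `u`. -/
theorem exists_critical_curve
    (f : ℝ → ℝ → ℝ)
    (hcont : ContinuousOn (fun p : ℝ × ℝ => f p.1 p.2) (Ioo 0 1 ×ˢ Ioi 0))
    (hmono : ∀ u ∈ Ioo (0:ℝ) 1, StrictMonoOn (f u) (Ioi 0))
    (I : Set ℝ) (hIopen : IsOpen I) (hIconn : I.OrdConnected) (hIsub : I ⊆ Ioo 0 1)
    (hin : ∀ u ∈ I, (∃ v > (0:ℝ), f u v < 0) ∧ (∃ v > (0:ℝ), 0 < f u v))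
    (hout : ∀ u ∈ Ioo (0:ℝ) 1 \ closure I, ∀ v > (0:ℝ), f u v < 0) :
    ∃ vc : ℝ → ℝ≥0∞,
      (∀ u ∈ Ioo (0:ℝ) 1, (vc u < ⊤ ↔ u ∈ I)) ∧
      (∀ u ∈ Ioo (0:ℝ) 1, ∀ v > (0:ℝ),
        (f u v < 0 ↔ ENNReal.ofReal v < vc u) ∧ (0 < f u v ↔ vc u < ENNReal.ofReal v)) ∧
      ((∀ v ∈ Ioi (0:ℝ), ConcaveOn ℝ (Ioo (0:ℝ) 1) (fun u => f u v)) →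
        ∀ a b c : ℝ, a ∈ Ioo (0:ℝ) 1 → c ∈ Ioo (0:ℝ) 1 → a < b → b < c →
          vc b ≤ max (vc a) (vc c)) := by
  classical
  -- continuity in v for fixed u
  have hcv : ∀ u ∈ Ioo (0:ℝ) 1, ContinuousOn (f u) (Ioi 0) := by
    intro u hu
    exact hcont.comp ((Continuous.prodMk_right u).continuousOn) (fun v hv => ⟨hu, hv⟩)
  -- continuity in u for fixed v
  have hcu : ∀ v ∈ Ioi (0:ℝ), ContinuousOn (fun u => f u v) (Ioo 0 1) := by
    intro v hv
    exact hcont.comp ((Continuous.prodMk_left v).continuousOn) (fun u hu => ⟨hu, hv⟩)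
  -- outside I (within (0,1)), f is negative everywhere
  have hneg : ∀ u ∈ Ioo (0:ℝ) 1, u ∉ I → ∀ v > (0:ℝ), f u v < 0 := by
    intro u hu huI
    by_cases hcl : u ∈ closure I
    · -- boundary point: f u v ≤ 0 for all v by continuity, then strict by monotonicity
      have hle : ∀ v > (0:ℝ), f u v ≤ 0 := by
        intro v hv
        -- I lies entirely on one side of u
        have hside : (∀ x ∈ I, x < u) ∨ (∀ x ∈ I, u < x) := by
          by_contra h
          push_neg at h
          obtain ⟨⟨x, hx, hux⟩, ⟨y, hy, hyu⟩⟩ := h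
          exact huI (hIconn.out hy hx ⟨hyu, hux⟩)
        rcases hside with hside | hside
        · -- approach from the right
          have hsub : Ioo u 1 ⊆ Ioo (0:ℝ) 1 \ closure I := by
            intro t ht
            refine ⟨⟨lt_trans hu.1 ht.1, ht.2⟩, ?_⟩
            intro htc
            have : t ≤ u := by
              have : closure I ⊆ Iic u :=
                closure_minimal (fun x hx => le_of_lt (hside x hx)) isClosed_Iic
              exact this htc
            exact absurd ht.1 (not_lt.mpr this)
          have hne : (𝓝[Ioo u 1] u).NeBot := left_nhdsWithin_Ioo_neBot hu.2
          have hct : ContinuousWithinAt (fun u => f u v) (Ioo u 1) u :=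
            ((hcu v hv) u hu).mono (fun t ht => ⟨lt_trans hu.1 ht.1, ht.2⟩)
          refine le_of_tendsto hct ?_
          filter_upwards [self_mem_nhdsWithin] with t ht
          exact le_of_lt (hout t (hsub ht) v hv)
        · -- approach from the left
          have hsub : Ioo 0 u ⊆ Ioo (0:ℝ) 1 \ closure I := by
            intro t ht
            refine ⟨⟨ht.1, lt_trans ht.2 hu.2⟩, ?_⟩
            intro htc
            have : u ≤ t := by
              have : closure I ⊆ Ici u :=
                closure_minimal (fun x hx => le_of_lt (hside x hx)) isClosed_Ici
              exact this htc
            exact absurd ht.2 (not_lt.mpr this)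
          have hne : (𝓝[Ioo 0 u] u).NeBot := right_nhdsWithin_Ioo_neBot hu.1
          have hct : ContinuousWithinAt (fun u => f u v) (Ioo 0 u) u :=
            ((hcu v hv) u hu).mono (fun t ht => ⟨ht.1, lt_trans ht.2 hu.2⟩)
          refine le_of_tendsto hct ?_
          filter_upwards [self_mem_nhdsWithin] with t ht
          exact le_of_lt (hout t (hsub ht) v hv)
      intro v hv
      calc f u v < f u (v + 1) := hmono u hu hv (lt_trans hv (by linarith)) (by linarith)
        _ ≤ 0 := hle (v + 1) (by linarith)
    · exact hout u ⟨hu, hcl⟩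
  -- root existence on I
  have hroot : ∀ u ∈ I, ∃ r, 0 < r ∧ f u r = 0 := by
    intro u hu
    obtain ⟨⟨v₁, hv₁, hn⟩, ⟨v₂, hv₂, hp⟩⟩ := hin u hu
    have huO := hIsub hu
    have h12 : v₁ < v₂ := by
      by_contra h
      push_neg at h
      have := (hmono u huO).monotoneOn hv₂ hv₁ h
      linarith
    have hIcc : Icc v₁ v₂ ⊆ Ioi (0:ℝ) := fun t ht => lt_of_lt_of_le hv₁ ht.1
    have := intermediate_value_Icc (le_of_lt h12) (((hcv u huO)).mono hIcc)
    obtain ⟨r, hr, hfr⟩ := this ⟨le_of_lt hn, le_of_lt hp⟩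
    exact ⟨r, lt_of_lt_of_le hv₁ hr.1, hfr⟩
  -- the critical curve
  set vc : ℝ → ℝ≥0∞ := fun u =>
    if h : ∃ r, 0 < r ∧ f u r = 0 then ENNReal.ofReal h.choose else ⊤ with hvcdef
  -- if u in (0,1) and a root exists, then u ∈ I
  have hIin : ∀ u ∈ Ioo (0:ℝ) 1, (∃ r, 0 < r ∧ f u r = 0) → u ∈ I := by
    intro u hu ⟨r, hr, hfr⟩
    by_contra huI
    exact absurd hfr (ne_of_lt (hneg u hu huI r hr))
  refine ⟨vc, ?_, ?_, ?_⟩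
  · intro u hu
    constructor
    · intro hlt
      by_contra huI
      have : ¬ ∃ r, 0 < r ∧ f u r = 0 := fun h => huI (hIin u hu h)
      simp only [hvcdef, dif_neg this] at hlt
      exact absurd hlt (lt_irrefl _)
    · intro huI
      have h := hroot u huI
      simp only [hvcdef, dif_pos h]
      exact ENNReal.ofReal_lt_top
  · intro u hu v hv
    by_cases h : ∃ r, 0 < r ∧ f u r = 0
    · obtain ⟨hr, hfr⟩ := h.choose_spec
      set r := h.choose with hrdef
      have hvceq : vc u = ENNReal.ofReal r := by simp only [hvcdef, dif_pos h]; rfl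
      rw [hvceq]
      have hlt1 : f u v < 0 ↔ v < r := by
        constructor
        · intro hn
          by_contra hrle
          push_neg at hrle
          have := (hmono u hu).monotoneOn (Set.mem_Ioi.mpr hr) (Set.mem_Ioi.mpr hv) hrle
          rw [hfr] at this; linarith
        · intro hvr
          have := hmono u hu (Set.mem_Ioi.mpr hv) (Set.mem_Ioi.mpr hr) hvr
          rw [hfr] at this; linarith
      have hlt2 : 0 < f u v ↔ r < v := by
        constructor
        · intro hp
          by_contra hvle
          push_neg at hvle
          have := (hmono u hu).monotoneOn (Set.mem_Ioi.mpr hv) (Set.mem_Ioi.mpr hr) hvle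
          rw [hfr] at this; linarith
        · intro hrv
          have := hmono u hu (Set.mem_Ioi.mpr hr) (Set.mem_Ioi.mpr hv) hrv
          rw [hfr] at this; linarith
      constructor
      · rw [hlt1, ENNReal.ofReal_lt_ofReal_iff hr]
      · rw [hlt2, ENNReal.ofReal_lt_ofReal_iff hv]
    · have huI : u ∉ I := fun hI => h (hroot u hI)
      have hvceq : vc u = ⊤ := by simp only [hvcdef]; exact dif_neg h
      rw [hvceq]
      have hn := hneg u hu huI v hv
      constructor
      · exact iff_of_true hn ENNReal.ofReal_lt_top
      · exact iff_of_false (not_lt.mpr (le_of_lt hn)) not_top_lt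
  · intro hconc a b c ha hc hab hbc
    by_cases hfa : vc a = ⊤
    · rw [hfa]; exact le_trans le_top (le_max_left _ _)
    by_cases hfc : vc c = ⊤
    · rw [hfc]; exact le_trans le_top (le_max_right _ _)
    -- a, c ∈ I, hence b ∈ I
    have haroot : ∃ r, 0 < r ∧ f a r = 0 := by
      by_contra h; exact hfa (by simp only [hvcdef, dif_neg h])
    have hcroot : ∃ r, 0 < r ∧ f c r = 0 := by
      by_contra h; exact hfc (by simp only [hvcdef, dif_neg h])
    have haI : a ∈ I := hIin a ha haroot
    have hcI : c ∈ I := hIin c hc hcroot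
    have hbI : b ∈ I := hIconn.out haI hcI ⟨le_of_lt hab, le_of_lt hbc⟩
    have hb : b ∈ Ioo (0:ℝ) 1 := hIsub hbI
    set ra := haroot.choose with hradef
    have hra : 0 < ra := haroot.choose_spec.1
    have hfra : f a ra = 0 := haroot.choose_spec.2
    set rc := hcroot.choose with hrcdef
    have hrc : 0 < rc := hcroot.choose_spec.1
    have hfrc : f c rc = 0 := hcroot.choose_spec.2
    set V := max ra rc with hV
    have hVpos : 0 < V := lt_of_lt_of_le hra (le_max_left _ _)
    -- f a V ≥ 0 and f c V ≥ 0
    have hfaV : 0 ≤ f a V := by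
      have := (hmono a ha).monotoneOn (Set.mem_Ioi.mpr hra) (Set.mem_Ioi.mpr hVpos)
        (le_max_left _ _)
      rw [hfra] at this; exact this
    have hfcV : 0 ≤ f c V := by
      have := (hmono c hc).monotoneOn (Set.mem_Ioi.mpr hrc) (Set.mem_Ioi.mpr hVpos)
        (le_max_right _ _)
      rw [hfrc] at this; exact this
    -- concavity gives f b V ≥ 0
    have hfbV : 0 ≤ f b V := by
      have hcc := hconc V hVpos
      set t := (c - b) / (c - a) with ht
      set s := (b - a) / (c - a) with hs
      have hca : (0:ℝ) < c - a := by linarith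
      have ht0 : 0 ≤ t := div_nonneg (by linarith) (le_of_lt hca)
      have hs0 : 0 ≤ s := div_nonneg (by linarith) (le_of_lt hca)
      have hts : t + s = 1 := by
        rw [ht, hs, ← add_div, div_eq_one_iff_eq hca.ne']; ring
      have hcomb : t • a + s • c = b := by
        simp only [smul_eq_mul, ht, hs]
        field_simp
        ring
      have h2 := hcc.2 ha hc ht0 hs0 hts
      rw [hcomb] at h2
      calc (0:ℝ) ≤ t * 0 + s * 0 := by simp
        _ ≤ t * f a V + s * f c V := by
            apply add_le_add
            · exact mul_le_mul_of_nonneg_left hfaV ht0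
            · exact mul_le_mul_of_nonneg_left hfcV hs0
        _ ≤ f b V := by simpa [smul_eq_mul] using h2
    -- hence the root of b is ≤ V
    have hbroot : ∃ r, 0 < r ∧ f b r = 0 := hroot b hbI
    set rb := hbroot.choose with hrbdef
    have hrb : 0 < rb := hbroot.choose_spec.1
    have hfrb : f b rb = 0 := hbroot.choose_spec.2
    have hvcb : vc b = ENNReal.ofReal rb := by simp only [hvcdef, dif_pos hbroot]; rfl
    have hvca : vc a = ENNReal.ofReal ra := by simp only [hvcdef, dif_pos haroot]; rfl
    have hvcc : vc c = ENNReal.ofReal rc := by simp only [hvcdef, dif_pos hcroot]; rfl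
    have hrbV : rb ≤ V := by
      by_contra h
      push_neg at h
      have := hmono b hb (Set.mem_Ioi.mpr hVpos) (Set.mem_Ioi.mpr hrb) h
      rw [hfrb] at this
      linarith
    rw [hvcb, hvca, hvcc]
    calc ENNReal.ofReal rb ≤ ENNReal.ofReal V := ENNReal.ofReal_le_ofReal hrbV
      _ ≤ max (ENNReal.ofReal ra) (ENNReal.ofReal rc) := by
          rcases le_total ra rc with h | h
          · rw [hV, max_eq_right h]; exact le_max_right _ _
          · rw [hV, max_eq_left h]; exact le_max_left _ _
end

section
/- Suppose a₀ < c₀ < a₁ < c₁ and b₁ < d₁ < b₀ < d₀ (all positive). Define, for s ∈ [0,1], averaged coefficients b_s = ((1-s)α₀b₀ + sα₁b₁)/α_s, d_s = ((1-s)β₀d₀ + sβ₁d₁)/β_s (with α_s, β_s convex combinations as usual, α₀,α₁,β₀,β₁ > 0), and similarly a_s, c_s. Let I = {s : a_s > c_s} and J = {s : b_s > d_s}. Then the region K = {(x,y) ∈ ℝ₊² : x ≥ x̃, 0 ≤ y ≤ ỹ}, where (x̃, ỹ) is the intersection of the lines c₀x + d₀y = 1 and c₁x + d₁y = 1, is positively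 invariant under both vector fields F₀ and F₁ (the Lotka–Volterra fields with environments 0 and 1). -/
open Set

private lemma exists_Icc_of_eventually_nhdsWithin {t : ℝ} {p : ℝ → Prop}
    (h : ∀ᶠ s in nhdsWithin t (Ici t), p s) : ∃ ε > 0, ∀ s ∈ Icc t (t + ε), p s := by
  rcases mem_nhdsGE_iff_exists_Icc_subset.1 h with ⟨u, hu, hsub⟩
  refine ⟨u - t, by linarith [hu], fun s hs => hsub ⟨hs.1, by linarith [hs.2]⟩⟩

private lemma pos_deriv_right {f : ℝ → ℝ} {f' t : ℝ} (hf : HasDerivAt f f' t) (h : 0 < f') :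
    ∃ ε > 0, ∀ s ∈ Ioc t (t + ε), f t < f s := by
  have hs := hasDerivAt_iff_tendsto_slope.1 hf
  have h2 : ∀ᶠ s in nhdsWithin t {t}ᶜ, 0 < slope f t s := hs.eventually (eventually_gt_nhds h)
  have h3 : ∀ᶠ s in nhdsWithin t (Ioi t), 0 < slope f t s :=
    h2.filter_mono (nhdsWithin_mono t (fun s hs => ne_of_gt hs))
  rcases mem_nhdsGT_iff_exists_Ioc_subset.1 h3 with ⟨u, hu, hsub⟩
  refine ⟨u - t, by linarith [mem_Ioi.1 hu], fun s hs => ?_⟩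
  have hps : 0 < slope f t s := hsub ⟨hs.1, by linarith [hs.2]⟩
  rw [slope_def_field, div_pos_iff] at hps
  rcases hps with ⟨h1, _⟩ | ⟨_, h2'⟩
  · linarith
  · exfalso; linarith [hs.1]

private lemma neg_deriv_right {f : ℝ → ℝ} {f' t : ℝ} (hf : HasDerivAt f f' t) (h : f' < 0) :
    ∃ ε > 0, ∀ s ∈ Ioc t (t + ε), f s < f t := by
  rcases pos_deriv_right hf.neg (by linarith : 0 < -f') with ⟨ε, hε, H⟩
  exact ⟨ε, hε, fun s hs => by have := H s hs; simp only [Pi.neg_apply] at this; linarith⟩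

private lemma LV_invariant (a b c d α β xt yt : ℝ) (hα : 0 < α) (hβ : 0 < β)
    (hxt : 0 < xt) (hyt : 0 < yt) (ha : 0 < a) (hac : a < c) (hb : 0 < b) (hbd : b < d)
    (hline : c * xt + d * yt = 1)
    (z : ℝ → ℝ × ℝ)
    (hz : ∀ t, HasDerivAt z (α * (z t).1 * (1 - a * (z t).1 - b * (z t).2),
        β * (z t).2 * (1 - c * (z t).1 - d * (z t).2)) t)
    (h0 : xt ≤ (z 0).1 ∧ 0 ≤ (z 0).2 ∧ (z 0).2 ≤ yt) :
    ∀ t ≥ (0:ℝ), xt ≤ (z t).1 ∧ 0 ≤ (z t).2 ∧ (z t).2 ≤ yt := by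
  set x : ℝ → ℝ := fun s => (z s).1 with hxdef
  set y : ℝ → ℝ := fun s => (z s).2 with hydef
  have hc : 0 < c := lt_trans ha hac
  have hd : 0 < d := lt_trans hb hbd
  have hx : ∀ s, HasDerivAt x (α * x s * (1 - a * x s - b * y s)) s := fun s => (hz s).fst
  have hy : ∀ s, HasDerivAt y (β * y s * (1 - c * x s - d * y s)) s := fun s => (hz s).snd
  have cx : Continuous x := continuous_iff_continuousAt.2 fun s => (hx s).continuousAt
  have cy : Continuous y := continuous_iff_continuousAt.2 fun s => (hy s).continuousAt
  -- abbreviation for the good set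
  set P : ℝ → Prop := fun s => xt ≤ x s ∧ 0 ≤ y s ∧ y s ≤ yt with hPdef
  -- the x-derivative is positive on the relevant boundary piece
  have xder_pos : ∀ t₀, y t₀ ≤ yt → x t₀ = xt → 0 < α * x t₀ * (1 - a * x t₀ - b * y t₀) := by
    intro t₀ hyle hxeq
    rw [hxeq]
    have h1 : 1 - a * xt - b * y t₀ > 0 := by nlinarith
    positivity
  -- local forward invariance
  have local_inv : ∀ t₀ : ℝ, P t₀ → ∃ ε > 0, ∀ s ∈ Icc t₀ (t₀ + ε), P s := by
    intro t₀ ⟨hx0, hy0, hy1⟩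
    -- Part 1 : x-coordinate stays ≥ xt
    have part1 : ∃ ε > 0, ∀ s ∈ Icc t₀ (t₀ + ε), xt ≤ x s := by
      rcases eq_or_lt_of_le hx0 with heq | hlt
      · -- boundary: derivative is positive
        have hpos := xder_pos t₀ hy1 heq.symm
        rcases pos_deriv_right (hx t₀) hpos with ⟨ε, hε, H⟩
        refine ⟨ε, hε, fun s hs => ?_⟩
        rcases eq_or_lt_of_le hs.1 with h | h
        · rw [← h, ← heq]
        · exact le_of_lt (heq.trans_lt (H s ⟨h, hs.2⟩))
      · have hev : ∀ᶠ s in nhdsWithin t₀ (Ici t₀), xt ≤ x s :=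
          ((cx.continuousAt.eventually (eventually_gt_nhds hlt)).mono
            fun s hs => le_of_lt hs).filter_mono nhdsWithin_le_nhds
        exact exists_Icc_of_eventually_nhdsWithin hev
    -- Part 2 : y-coordinate stays ≥ 0
    have part2 : ∃ ε > 0, ∀ s ∈ Icc t₀ (t₀ + ε), 0 ≤ y s := by
      rcases eq_or_lt_of_le hy0 with heq | hlt
      · -- y t₀ = 0 : Grönwall forces y ≡ 0 on [t₀, t₀+1]
        set g : ℝ → ℝ := fun s => β * (1 - c * x s - d * y s) with hgdef
        have cg : Continuous g := by continuity
        obtain ⟨C, hC⟩ := (isCompact_Icc (a := t₀) (b := t₀ + 1)).exists_bound_of_continuousOn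
          cg.continuousOn
        have key : ∀ s ∈ Icc t₀ (t₀ + 1), ‖y s‖ ≤ gronwallBound 0 C 0 (s - t₀) := by
          apply norm_le_gronwallBound_of_norm_deriv_right_le (f' := fun s => g s * y s)
            cy.continuousOn
          · intro s _
            have : β * y s * (1 - c * x s - d * y s) = g s * y s := by rw [hgdef]; ring
            exact this ▸ (hy s).hasDerivWithinAt
          · simp [← heq]
          · intro s hs
            rw [norm_mul]
            have h1 : ‖g s‖ ≤ C := hC s (Ico_subset_Icc_self hs)
            have h2 : (0:ℝ) ≤ ‖y s‖ := norm_nonneg _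
            nlinarith [norm_nonneg (g s)]
        refine ⟨1, one_pos, fun s hs => ?_⟩
        have := key s hs
        rw [gronwallBound_ε0_δ0] at this
        have : ‖y s‖ = 0 := le_antisymm this (norm_nonneg _)
        rw [norm_eq_zero] at this
        rw [this]
      · have hev : ∀ᶠ s in nhdsWithin t₀ (Ici t₀), 0 ≤ y s :=
          ((cy.continuousAt.eventually (eventually_gt_nhds hlt)).mono
            fun s hs => le_of_lt hs).filter_mono nhdsWithin_le_nhds
        exact exists_Icc_of_eventually_nhdsWithin hev
    -- Part 3 : y-coordinate stays ≤ yt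
    have part3 : ∃ ε > 0, ∀ s ∈ Icc t₀ (t₀ + ε), y s ≤ yt := by
      rcases eq_or_lt_of_le hy1 with heq | hlt
      · rcases eq_or_lt_of_le hx0 with hxeq | hxlt
        · -- corner point: second-derivative argument
          set w : ℝ → ℝ := fun s => β * y s * (1 - c * x s - d * y s) with hwdef
          have hw0 : w t₀ = 0 := by
            simp only [hwdef]
            rw [← hxeq, heq]
            have hz0 : 1 - c * xt - d * yt = 0 := by linarith
            rw [hz0]; ring
          set vx := α * x t₀ * (1 - a * x t₀ - b * y t₀) with hvx
          set vy := β * y t₀ * (1 - c * x t₀ - d * y t₀) with hvy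
          have hvy0 : vy = 0 := by
            rw [hvy, ← hxeq, heq]
            have hz0 : 1 - c * xt - d * yt = 0 := by linarith
            rw [hz0]; ring
          have hvxpos : 0 < vx := xder_pos t₀ hy1 hxeq.symm
          -- derivative of w at t₀
          have hwderiv : HasDerivAt w
              ((β * vy) * (1 - c * x t₀ - d * y t₀) + (β * y t₀) * (0 - c * vx - d * vy)) t₀ := by
            have h1 : HasDerivAt (fun s => β * y s) (β * vy) t₀ := (hy t₀).const_mul β
            have h2 : HasDerivAt (fun s => 1 - c * x s - d * y s) (0 - c * vx - d * vy) t₀ :=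
              (((hasDerivAt_const t₀ (1:ℝ)).sub ((hx t₀).const_mul c))).sub ((hy t₀).const_mul d)
            exact h1.mul h2
          have hWneg : (β * vy) * (1 - c * x t₀ - d * y t₀) + (β * y t₀) * (0 - c * vx - d * vy)
              < 0 := by
            rw [hvy0, heq]
            have heq2 : β * 0 * (1 - c * x t₀ - d * yt) + β * yt * (0 - c * vx - d * 0)
                = -(β * yt * (c * vx)) := by ring
            rw [heq2]
            have : 0 < β * yt * (c * vx) := by positivity
            linarith
          rcases neg_deriv_right hwderiv hWneg with ⟨ε, hε, H⟩
          refine ⟨ε, hε, fun s hs => ?_⟩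
          -- y is antitone on [t₀, t₀+ε]
          have hanti : AntitoneOn y (Icc t₀ (t₀ + ε)) := by
            apply antitoneOn_of_deriv_nonpos (convex_Icc _ _) cy.continuousOn
            · exact fun u _ => ((hy u).differentiableAt).differentiableWithinAt
            · intro u hu
              rw [interior_Icc] at hu
              rw [(hy u).deriv]
              have : w u < w t₀ := H u ⟨hu.1, le_of_lt hu.2⟩
              rw [hw0] at this
              exact le_of_lt this
          have := hanti (left_mem_Icc.2 (by linarith)) hs hs.1
          rw [heq] at this
          exact this
        · -- interior in x: derivative of y at t₀ is strictly negative
          have hneg : β * y t₀ * (1 - c * x t₀ - d * y t₀) < 0 := by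
            rw [heq]
            have h1 : 1 - c * x t₀ - d * yt < 0 := by nlinarith
            exact mul_neg_of_pos_of_neg (mul_pos hβ hyt) h1
          rcases neg_deriv_right (hy t₀) hneg with ⟨ε, hε, H⟩
          refine ⟨ε, hε, fun s hs => ?_⟩
          rcases eq_or_lt_of_le hs.1 with h | h
          · rw [← h, heq]
          · exact le_of_lt ((H s ⟨h, hs.2⟩).trans_le heq.le)
      · have hev : ∀ᶠ s in nhdsWithin t₀ (Ici t₀), y s ≤ yt :=
          ((cy.continuousAt.eventually (eventually_lt_nhds hlt)).mono
            fun s hs => le_of_lt hs).filter_mono nhdsWithin_le_nhds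
        exact exists_Icc_of_eventually_nhdsWithin hev
    rcases part1 with ⟨ε₁, hε₁, H₁⟩
    rcases part2 with ⟨ε₂, hε₂, H₂⟩
    rcases part3 with ⟨ε₃, hε₃, H₃⟩
    refine ⟨min ε₁ (min ε₂ ε₃), by positivity, fun s hs => ?_⟩
    have hs1 : s ∈ Icc t₀ (t₀ + ε₁) := ⟨hs.1, hs.2.trans (by
      have := min_le_left ε₁ (min ε₂ ε₃); linarith)⟩
    have hs2 : s ∈ Icc t₀ (t₀ + ε₂) := ⟨hs.1, hs.2.trans (by
      have h := (min_le_right ε₁ (min ε₂ ε₃)).trans (min_le_left ε₂ ε₃); linarith)⟩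
    have hs3 : s ∈ Icc t₀ (t₀ + ε₃) := ⟨hs.1, hs.2.trans (by
      have h := (min_le_right ε₁ (min ε₂ ε₃)).trans (min_le_right ε₂ ε₃); linarith)⟩
    exact ⟨H₁ s hs1, H₂ s hs2, H₃ s hs3⟩
  -- global argument
  intro t ht
  rcases eq_or_lt_of_le ht with rfl | htpos
  · exact h0
  by_contra hnot
  set A : Set ℝ := {s | s ∈ Icc 0 t ∧ ∀ u ∈ Icc (0:ℝ) s, P u} with hAdef
  have h0A : (0:ℝ) ∈ A := by
    refine ⟨⟨le_refl 0, le_of_lt htpos⟩, fun u hu => ?_⟩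
    have : u = 0 := le_antisymm hu.2 hu.1
    rw [this]; exact h0
  have hAne : A.Nonempty := ⟨0, h0A⟩
  have hAbdd : BddAbove A := ⟨t, fun s hs => hs.1.2⟩
  set m := sSup A with hmdef
  have hm0 : 0 ≤ m := le_csSup hAbdd h0A
  have hmt : m ≤ t := csSup_le hAne fun s hs => hs.1.2
  -- all u with 0 ≤ u < m satisfy P
  have hbelow : ∀ u, 0 ≤ u → u < m → P u := by
    intro u hu hum
    obtain ⟨s, hsA, hus⟩ := exists_lt_of_lt_csSup hAne hum
    exact hsA.2 u ⟨hu, le_of_lt hus⟩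
  -- P holds at m
  have hPm : P m := by
    rcases eq_or_lt_of_le hm0 with heq | hpos
    · rw [← heq]; exact h0
    · have hev : ∀ᶠ u in nhdsWithin m (Iio m), P u := by
        filter_upwards [Ioo_mem_nhdsLT hpos] with u hu
        exact hbelow u (le_of_lt hu.1) hu.2
      have hne : (nhdsWithin m (Iio m)).NeBot := nhdsLT_neBot m
      refine ⟨?_, ?_, ?_⟩
      · exact ge_of_tendsto ((cx.continuousAt).continuousWithinAt.tendsto)
          (hev.mono fun u hu => hu.1)
      · exact ge_of_tendsto ((cy.continuousAt).continuousWithinAt.tendsto)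
          (hev.mono fun u hu => hu.2.1)
      · exact le_of_tendsto ((cy.continuousAt).continuousWithinAt.tendsto)
          (hev.mono fun u hu => hu.2.2)
  -- m must equal t
  have hmeq : m = t := by
    by_contra hne
    have hmlt : m < t := lt_of_le_of_ne hmt hne
    obtain ⟨ε, hε, H⟩ := local_inv m hPm
    set s' := min (m + ε) t with hs'def
    have hs'A : s' ∈ A := by
      refine ⟨⟨le_trans hm0 (le_min (by linarith) (le_of_lt hmlt)), min_le_right _ _⟩,
        fun u hu => ?_⟩
      rcases le_or_gt u m with h | h
      · rcases eq_or_lt_of_le h with rfl | h'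
        · exact hPm
        · exact hbelow u hu.1 h'
      · refine H u ⟨le_of_lt h, ?_⟩
        exact hu.2.trans (min_le_left _ _)
    have : s' ≤ m := le_csSup hAbdd hs'A
    have : m < s' := lt_min (by linarith) hmlt
    linarith
  exact hnot (hmeq ▸ hPm)

/-- In the configuration `a₀ < c₀ < a₁ < c₁`, `b₁ < d₁ < b₀ < d₀`, the region
`K = {(x,y) : x ≥ xt, 0 ≤ y ≤ yt}` determined by the intersection `(xt,yt)` of the two
horizontal isoclines is positively invariant under both Lotka–Volterra flows. -/
theorem invariant_region
    (a₀ a₁ b₀ b₁ c₀ c₁ d₀ d₁ α₀ α₁ β₀ β₁ : ℝ)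
    (ha₀ : 0 < a₀) (hb₁ : 0 < b₁) (hα₀ : 0 < α₀) (hα₁ : 0 < α₁)
    (hβ₀ : 0 < β₀) (hβ₁ : 0 < β₁)
    (h1 : a₀ < c₀) (h2 : c₀ < a₁) (h3 : a₁ < c₁)
    (h4 : b₁ < d₁) (h5 : d₁ < b₀) (h6 : b₀ < d₀)
    (xt yt : ℝ) (hxt : 0 < xt) (hyt : 0 < yt)
    (hline₀ : c₀ * xt + d₀ * yt = 1) (hline₁ : c₁ * xt + d₁ * yt = 1) :
    let F₀ : ℝ × ℝ → ℝ × ℝ := fun p =>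
      (α₀ * p.1 * (1 - a₀ * p.1 - b₀ * p.2), β₀ * p.2 * (1 - c₀ * p.1 - d₀ * p.2))
    let F₁ : ℝ × ℝ → ℝ × ℝ := fun p =>
      (α₁ * p.1 * (1 - a₁ * p.1 - b₁ * p.2), β₁ * p.2 * (1 - c₁ * p.1 - d₁ * p.2))
    let K : Set (ℝ × ℝ) := {p | xt ≤ p.1 ∧ 0 ≤ p.2 ∧ p.2 ≤ yt}
    (∀ z : ℝ → ℝ × ℝ, (∀ t, HasDerivAt z (F₀ (z t)) t) → z 0 ∈ K →
      ∀ t ≥ (0:ℝ), z t ∈ K) ∧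
    (∀ z : ℝ → ℝ × ℝ, (∀ t, HasDerivAt z (F₁ (z t)) t) → z 0 ∈ K →
      ∀ t ≥ (0:ℝ), z t ∈ K) := by
  intro F₀ F₁ K
  constructor
  · intro z hz hz0 t ht
    exact LV_invariant a₀ b₀ c₀ d₀ α₀ β₀ xt yt hα₀ hβ₀ hxt hyt ha₀ h1
      (by linarith) h6 hline₀ z hz hz0 t ht
  · intro z hz hz0 t ht
    exact LV_invariant a₁ b₁ c₁ d₁ α₁ β₁ xt yt hα₁ hβ₁ hxt hyt
      (by linarith) h3 hb₁ h4 hline₁ z hz hz0 t ht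
end
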